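/- arXiv:2108.03450 — 3 statements merged into one kernel-verified Lean document; each statement's English description precedes it below -/
import Mathlib

section
/- Let μ, ν ∈ 𝓜 with μ ≤_pcd ν. Then μ ≤_pc ν if and only if C_μ(k) ≤ C_ν(k) for all k ∈ ℝ. -/
open MeasureTheory Set Filter

noncomputable section

/-- `η ∈ 𝓜`: a finite Borel measure on ℝ with finite first moment. -/
def MemM (η : MeasureTheory.Measure ℝ) : Prop :=
  MeasureTheory.IsFiniteMeasure η ∧ MeasureTheory.Integrable (fun x : ℝ => x) η

/-- Convex-decreasing order `≤_cd`. -/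
def LeCD (η χ : MeasureTheory.Measure ℝ) : Prop :=
  ∀ f : ℝ → ℝ, ConvexOn ℝ Set.univ f → Antitone f →
    MeasureTheory.Integrable f η → MeasureTheory.Integrable f χ →
    ∫ x, f x ∂η ≤ ∫ x, f x ∂χ

/-- Positive convex-decreasing order `≤_pcd`. -/
def LePCD (η χ : MeasureTheory.Measure ℝ) : Prop :=
  ∀ f : ℝ → ℝ, (∀ x, 0 ≤ f x) → ConvexOn ℝ Set.univ f → Antitone f →
    MeasureTheory.Integrable f η → MeasureTheory.Integrable f χ →
    ∫ x, f x ∂η ≤ ∫ x, f x ∂χ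

/-- Positive convex order `≤_pc`. -/
def LePC (η χ : MeasureTheory.Measure ℝ) : Prop :=
  ∀ f : ℝ → ℝ, (∀ x, 0 ≤ f x) → ConvexOn ℝ Set.univ f →
    MeasureTheory.Integrable f η → MeasureTheory.Integrable f χ →
    ∫ x, f x ∂η ≤ ∫ x, f x ∂χ

/-- A supermartingale coupling of `η` and `χ`. -/
def IsSupermartingaleCoupling (η χ : MeasureTheory.Measure ℝ)
    (π : MeasureTheory.Measure (ℝ × ℝ)) : Prop :=
  MeasureTheory.IsProbabilityMeasure π ∧
  π.map Prod.fst = η ∧ π.map Prod.snd = χ ∧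
  MeasureTheory.Integrable (fun p : ℝ × ℝ => p.2) π ∧
  ∀ B : Set ℝ, MeasurableSet B →
    ∫ p in B ×ˢ (Set.univ : Set ℝ), (p : ℝ × ℝ).2 ∂π ≤ ∫ x in B, x ∂η

/-- The potential function `P_η(k) = ∫ (k-x)⁺ η(dx)`. -/
def Ppot (η : MeasureTheory.Measure ℝ) (k : ℝ) : ℝ := ∫ x, max (k - x) 0 ∂η

/-- The potential function `C_η(k) = ∫ (x-k)⁺ η(dx)`. -/
def Cpot (η : MeasureTheory.Measure ℝ) (k : ℝ) : ℝ := ∫ x, max (x - k) 0 ∂η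

/-- The left-continuous quantile function `G_η(u) = sup {k | η((-∞,k]) < u}`. -/
def quantile (η : MeasureTheory.Measure ℝ) (u : ℝ) : ℝ :=
  sSup {k : ℝ | (η (Set.Iic k)).toReal < u}

/-- The lift `μ_u = μ|_{(-∞,G(u))} + (u - μ((-∞,G(u)))) δ_{G(u)}`, with `μ_0 = 0`, `μ_1 = μ`. -/
def muU (μ : MeasureTheory.Measure ℝ) (u : ℝ) : MeasureTheory.Measure ℝ :=
  if u ≤ 0 then 0
  else if 1 ≤ u then μ
  else μ.restrict (Set.Iio (quantile μ u)) +
    (ENNReal.ofReal (u - (μ (Set.Iio (quantile μ u))).toReal)) •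
      MeasureTheory.Measure.dirac (quantile μ u)

/-- `S` is a shadow of `μ` in `ν`. -/
def IsShadow (μ ν S : MeasureTheory.Measure ℝ) : Prop :=
  MemM S ∧ LeCD μ S ∧ (∀ A : Set ℝ, MeasurableSet A → S A ≤ ν A) ∧
  ∀ η : MeasureTheory.Measure ℝ, MemM η → LeCD μ η →
    (∀ A : Set ℝ, MeasurableSet A → η A ≤ ν A) → LeCD S η

/-- `h` is the convex hull of `f`. -/
def IsConvexHullFn (f h : ℝ → ℝ) : Prop :=
  ConvexOn ℝ Set.univ h ∧ (∀ x, h x ≤ f x) ∧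
  ∀ g : ℝ → ℝ, ConvexOn ℝ Set.univ g → (∀ x, g x ≤ f x) → ∀ x, g x ≤ h x

/-- The class `𝒟(a,b)`. -/
def MemD (a b : ℝ) (f : ℝ → ℝ) : Prop :=
  (∀ x, 0 ≤ f x) ∧ Monotone f ∧ ConvexOn ℝ Set.univ f ∧
  Filter.Tendsto f Filter.atBot (nhds 0) ∧
  Filter.Tendsto (fun z => f z - (a * z - b)) Filter.atTop (nhds 0)

/-- The topological support of a measure. -/
def msupport (η : MeasureTheory.Measure ℝ) : Set ℝ :=
  {x : ℝ | ∀ U ∈ nhds x, η U ≠ 0}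

lemma ramp_convexOn (k : ℝ) : ConvexOn ℝ Set.univ (fun x : ℝ => max (x - k) 0) := by
  have h1 : ConvexOn ℝ Set.univ (fun x : ℝ => x - k) := by
    refine ⟨convex_univ, ?_⟩
    intro x _ y _ a b ha hb hab
    simp only [smul_eq_mul]
    have hk : a * k + b * k = k := by rw [← add_mul, hab, one_mul]
    linarith
  have h2 : ConvexOn ℝ Set.univ (fun _ : ℝ => (0:ℝ)) := convexOn_const 0 convex_univ
  have h3 := h1.sup h2
  have : (fun x : ℝ => max (x - k) 0) = ((fun x : ℝ => x - k) ⊔ fun _ : ℝ => (0:ℝ)) := by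
    funext x; simp [Pi.sup_apply]
  rw [this]; exact h3

lemma ramp_integrable (η : MeasureTheory.Measure ℝ) (hη : MemM η) (k : ℝ) :
    Integrable (fun x : ℝ => max (x - k) 0) η := by
  have : IsFiniteMeasure η := hη.1
  have h1 : Integrable (fun x : ℝ => |x| + |k|) η := hη.2.abs.add (integrable_const _)
  refine h1.mono ?_ ?_
  · exact ((continuous_id.sub continuous_const).max continuous_const).aestronglyMeasurable
  · filter_upwards with x
    simp only [Real.norm_eq_abs]
    rw [abs_of_nonneg (le_max_right _ _), abs_of_nonneg (by positivity)]
    rcases le_or_gt (x - k) 0 with h | h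
    · rw [max_eq_right h]; positivity
    · rw [max_eq_left h.le]
      have := abs_sub_abs_le_abs_sub x k
      have := abs_nonneg x
      have h2 : x - k ≤ |x - k| := le_abs_self _
      have h3 : |x - k| ≤ |x| + |k| := abs_sub _ _
      linarith

lemma slope4 {f : ℝ → ℝ} (hf : ConvexOn ℝ Set.univ f) {x1 y1 x2 y2 : ℝ}
    (h1 : x1 < y1) (h2 : x2 < y2) (hx : x1 ≤ x2) (hy : y1 ≤ y2) :
    (f y1 - f x1) / (y1 - x1) ≤ (f y2 - f x2) / (y2 - x2) := by
  have A : (f y1 - f x1) / (y1 - x1) ≤ (f y2 - f x1) / (y2 - x1) :=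
    hf.secant_mono (mem_univ x1) (mem_univ y1) (mem_univ y2) h1.ne' (h1.trans_le hy).ne' hy
  have B : (f x1 - f y2) / (x1 - y2) ≤ (f x2 - f y2) / (x2 - y2) :=
    hf.secant_mono (mem_univ y2) (mem_univ x1) (mem_univ x2) (h1.trans_le hy).ne h2.ne hx
  have e1 : (f x1 - f y2) / (x1 - y2) = (f y2 - f x1) / (y2 - x1) := by
    rw [← neg_div_neg_eq]; ring_nf
  have e2 : (f x2 - f y2) / (x2 - y2) = (f y2 - f x2) / (y2 - x2) := by
    rw [← neg_div_neg_eq]; ring_nf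
  rw [e1, e2] at B
  exact A.trans B

lemma antitoneOn_of_min {f : ℝ → ℝ} (hf : ConvexOn ℝ Set.univ f) {c : ℝ}
    (hc : ∀ x, f c ≤ f x) : AntitoneOn f (Set.Iic c) := by
  intro x hx y hy hxy
  rcases eq_or_lt_of_le hxy with rfl | hxy
  · exact le_refl _
  rcases eq_or_lt_of_le (Set.mem_Iic.mp hy) with rfl | hyc
  · exact hc x
  set a := (c - y) / (c - x)
  set b := (y - x) / (c - x)
  have hxc : x < c := hxy.trans hyc
  have ha : 0 ≤ a := div_nonneg (by linarith) (by linarith)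
  have hb : 0 ≤ b := div_nonneg (by linarith) (by linarith)
  have hne : c - x ≠ 0 := by intro h; linarith
  have hab : a + b = 1 := by simp only [a, b]; rw [← add_div, div_eq_one_iff_eq hne]; ring
  have hy' : a • x + b • c = y := by
    simp only [smul_eq_mul, a, b]; field_simp; ring
  have key := hf.2 (Set.mem_univ x) (Set.mem_univ c) ha hb hab
  rw [hy'] at key
  calc f y ≤ a * f x + b * f c := key
    _ ≤ a * f x + b * f x := by have := hc x; nlinarith
    _ = f x := by rw [← add_mul, hab, one_mul]

lemma monotoneOn_of_min {f : ℝ → ℝ} (hf : ConvexOn ℝ Set.univ f) {c : ℝ}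
    (hc : ∀ x, f c ≤ f x) : MonotoneOn f (Set.Ici c) := by
  intro x hx y hy hxy
  rcases eq_or_lt_of_le hxy with rfl | hxy
  · exact le_refl _
  rcases eq_or_lt_of_le (Set.mem_Ici.mp hx) with rfl | hcx
  · exact hc y
  set a := (y - x) / (y - c)
  set b := (x - c) / (y - c)
  have hcy : c < y := hcx.trans hxy
  have ha : 0 ≤ a := div_nonneg (by linarith) (by linarith)
  have hb : 0 ≤ b := div_nonneg (by linarith) (by linarith)
  have hne : y - c ≠ 0 := by intro h; linarith
  have hab : a + b = 1 := by simp only [a, b]; rw [← add_div, div_eq_one_iff_eq hne]; ring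
  have hx' : a • c + b • y = x := by
    simp only [smul_eq_mul, a, b]; field_simp; ring
  have key := hf.2 (Set.mem_univ c) (Set.mem_univ y) ha hb hab
  rw [hx'] at key
  calc f x ≤ a * f c + b * f y := key
    _ ≤ a * f y + b * f y := by have := hc y; nlinarith
    _ = f y := by rw [← add_mul, hab, one_mul]

lemma convexOn_min_comp {f : ℝ → ℝ} (hf : ConvexOn ℝ Set.univ f) {c : ℝ}
    (hanti : AntitoneOn f (Set.Iic c)) : ConvexOn ℝ Set.univ (fun x => f (min x c)) := by
  refine ⟨convex_univ, ?_⟩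
  intro x _ y _ a b ha hb hab
  simp only [smul_eq_mul]
  have h1 : a * min x c + b * min y c ≤ min (a * x + b * y) c := by
    refine le_min ?_ ?_
    · have : min x c ≤ x := min_le_left _ _
      have : min y c ≤ y := min_le_left _ _
      nlinarith [min_le_left x c, min_le_left y c]
    · have h1 := mul_le_mul_of_nonneg_left (min_le_right x c) ha
      have h2 := mul_le_mul_of_nonneg_left (min_le_right y c) hb
      have hc' : a * c + b * c = c := by rw [← add_mul, hab, one_mul]
      linarith
  have h2 : a * min x c + b * min y c ≤ c := h1.trans (min_le_right _ _)
  have h3 : min (a * x + b * y) c ≤ c := min_le_right _ _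
  have step1 : f (min (a * x + b * y) c) ≤ f (a * min x c + b * min y c) :=
    hanti h2 h3 h1
  have step2 := hf.2 (Set.mem_univ (min x c)) (Set.mem_univ (min y c)) ha hb hab
  simp only [smul_eq_mul] at step2
  exact step1.trans step2

lemma convexOn_max_comp {f : ℝ → ℝ} (hf : ConvexOn ℝ Set.univ f) {c : ℝ}
    (hmono : MonotoneOn f (Set.Ici c)) : ConvexOn ℝ Set.univ (fun x => f (max x c)) := by
  refine ⟨convex_univ, ?_⟩
  intro x _ y _ a b ha hb hab
  simp only [smul_eq_mul]
  have h1 : max (a * x + b * y) c ≤ a * max x c + b * max y c := by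
    refine max_le ?_ ?_
    · nlinarith [le_max_left x c, le_max_left y c]
    · have h1 := mul_le_mul_of_nonneg_left (le_max_right x c) ha
      have h2 := mul_le_mul_of_nonneg_left (le_max_right y c) hb
      have hc' : a * c + b * c = c := by rw [← add_mul, hab, one_mul]
      linarith
  have h2 : c ≤ max (a * x + b * y) c := le_max_right _ _
  have h3 : c ≤ a * max x c + b * max y c := h2.trans h1
  have step1 : f (max (a * x + b * y) c) ≤ f (a * max x c + b * max y c) :=
    hmono h2 h3 h1
  have step2 := hf.2 (Set.mem_univ (max x c)) (Set.mem_univ (max y c)) ha hb hab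
  simp only [smul_eq_mul] at step2
  exact step1.trans step2

lemma approx_ramps (h : ℝ → ℝ) (h0 : ∀ x, 0 ≤ h x) (hmono : Monotone h)
    (hconv : ConvexOn ℝ Set.univ h) (n : ℕ) :
    ∃ (M : ℕ) (cc kk : ℕ → ℝ), (∀ i, 0 ≤ cc i) ∧
      (∀ x, (∑ i ∈ Finset.range M, cc i * max (x - kk i) 0) ≤ h x) ∧
      (∀ x, x ≤ (n + 1 : ℝ) →
        h (x - 2 / (n + 1)) - h (-(n + 1 : ℝ)) ≤
          ∑ i ∈ Finset.range M, cc i * max (x - kk i) 0) := by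
  set n' : ℝ := (n : ℝ) + 1 with hn'def
  have hn' : 0 < n' := by positivity
  have hn'0 : n' ≠ 0 := hn'.ne'
  set Δ : ℝ := 1 / n' with hΔdef
  have hΔ : 0 < Δ := by positivity
  set m : ℝ := -n' with hmdef
  set t : ℕ → ℝ := fun i => m + i * Δ with htdef
  set N : ℕ := 2 * (n + 1) * (n + 1) with hNdef
  set s : ℕ → ℝ := fun i => (h (t (i + 1)) - h (t i)) * n' with hsdef
  set c : ℕ → ℝ := fun i => Nat.rec (s 0) (fun j _ => s (j + 1) - s j) i with hcdef
  have hc0 : c 0 = s 0 := rfl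
  have hcsucc : ∀ j, c (j + 1) = s (j + 1) - s j := fun j => rfl
  have hts : ∀ i, t (i + 1) = t i + Δ := by
    intro i; simp only [htdef]; push_cast; ring
  have hst : ∀ i, t i < t (i + 1) := by intro i; rw [hts]; linarith
  have htmono : ∀ i j : ℕ, i ≤ j → t i ≤ t j := by
    intro i j hij
    simp only [htdef]
    have : (i : ℝ) ≤ (j : ℝ) := Nat.cast_le.mpr hij
    nlinarith
  have hslope : ∀ i, s i = (h (t (i + 1)) - h (t i)) / (t (i + 1) - t i) := by
    intro i
    have e : t (i + 1) - t i = 1 / n' := by rw [hts]; simp [hΔdef]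
    rw [e, div_div_eq_mul_div, div_one]
  have hsmono : ∀ i, s i ≤ s (i + 1) := by
    intro i
    rw [hslope, hslope]
    exact slope4 hconv (hst i) (hst (i + 1)) (hst i).le (hst (i + 1)).le
  have hs0 : ∀ i, 0 ≤ s i := by
    intro i
    have := hmono (hst i).le
    simp only [hsdef]
    nlinarith
  have hcnn : ∀ i, 0 ≤ c i := by
    intro i
    cases i with
    | zero => rw [hc0]; exact hs0 0
    | succ j => rw [hcsucc]; linarith [hsmono j]
  set P : ℕ → ℝ → ℝ := fun J x => ∑ i ∈ Finset.range J, c i * max (x - t (i + 1)) 0 with hPdef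
  have hPsum : ∀ J x, P (J + 1) x = P J x + c J * max (x - t (J + 1)) 0 := by
    intro J x; simp only [hPdef]; rw [Finset.sum_range_succ]
  have hPform : ∀ j x, t (j + 1) ≤ x → P (j + 1) x = h (t j) - h (t 0) + s j * (x - t (j + 1)) := by
    intro j
    induction j with
    | zero =>
      intro x hx
      simp only [zero_add] at hx ⊢
      simp only [hPdef]
      rw [Finset.sum_range_succ, Finset.sum_range_zero, zero_add, hc0,
        max_eq_left (by linarith : (0:ℝ) ≤ x - t 1)]
      ring
    | succ j ih =>
      intro x hx
      have hx' : t (j + 1) ≤ x := le_trans (hst (j + 1)).le hx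
      rw [hPsum, ih x hx', hcsucc, max_eq_left (by linarith)]
      have key : s j * Δ = h (t (j + 1)) - h (t j) := by
        simp only [hsdef, hΔdef]
        field_simp
      have e : t (j + 1 + 1) = t (j + 1) + Δ := hts (j + 1)
      rw [e]
      linear_combination key
  have hPnn : ∀ J x, 0 ≤ P J x := by
    intro J x
    apply Finset.sum_nonneg
    intro i _
    exact mul_nonneg (hcnn i) (le_max_right _ _)
  have hPle : ∀ J x, P J x ≤ h x := by
    intro J
    induction J with
    | zero => intro x; simpa only [hPdef, Finset.sum_range_zero] using h0 x
    | succ J ih =>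
      intro x
      rcases le_or_gt x (t (J + 1)) with hx | hx
      · rw [hPsum, max_eq_right (by linarith), mul_zero, add_zero]; exact ih x
      · rw [hPform J x hx.le]
        have hs : s J ≤ (h x - h (t (J + 1))) / (x - t (J + 1)) := by
          rw [hslope]
          exact slope4 hconv (hst J) hx (hst J).le hx.le
        have h2 : s J * (x - t (J + 1)) ≤ h x - h (t (J + 1)) := by
          rw [← le_div_iff₀ (by linarith)]
          exact hs
        have h3 : h (t J) ≤ h (t (J + 1)) := hmono (hst J).le
        have h4 : 0 ≤ h (t 0) := h0 _
        linarith
  have hPmono : ∀ J K x, J ≤ K → P J x ≤ P K x := by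
    intro J K x hJK
    apply Finset.sum_le_sum_of_subset_of_nonneg (Finset.range_subset_range.mpr hJK)
    intro i _ _
    exact mul_nonneg (hcnn i) (le_max_right _ _)
  have htN : t N = n' := by
    simp only [htdef, hNdef, hΔdef, hmdef]
    push_cast
    field_simp
    ring
  have hN1 : 1 ≤ N := by
    have : 0 < N := by simp only [hNdef]; positivity
    omega
  have hPlb : ∀ x, x ≤ t N → h (x - 2 * Δ) - h (t 0) ≤ P N x := by
    intro x hx
    rcases le_or_gt x (t 1) with hx1 | hx1
    · have e1 : t 1 = t 0 + Δ := hts 0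
      have : x - 2 * Δ ≤ t 0 := by linarith
      have := hmono this
      linarith [hPnn N x]
    · have hxm : 1 ≤ (x - m) * n' := by
        have e1 : t 1 = m + Δ := by simp only [htdef]; push_cast; ring
        have : Δ < x - m := by linarith
        calc (1 : ℝ) = Δ * n' := by rw [hΔdef]; field_simp
          _ ≤ (x - m) * n' := by nlinarith
      have hxm0 : (0 : ℝ) ≤ (x - m) * n' := by linarith
      set j : ℕ := min N ⌊(x - m) * n'⌋₊ with hjdef
      have hj1 : 1 ≤ j := by
        apply le_min hN1
        exact Nat.le_floor (by exact_mod_cast hxm)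
      have hjN : j ≤ N := min_le_left _ _
      have hjle : (j : ℝ) ≤ (x - m) * n' := by
        calc (j : ℝ) ≤ (⌊(x - m) * n'⌋₊ : ℝ) := Nat.cast_le.mpr (min_le_right _ _)
          _ ≤ (x - m) * n' := Nat.floor_le hxm0
      have htj : t j ≤ x := by
        have h5 : (j : ℝ) * Δ ≤ (x - m) := by
          rw [hΔdef, mul_one_div, div_le_iff₀ hn']
          exact hjle
        simp only [htdef]
        linarith
      have htj1 : x ≤ t (j + 1) := by
        rcases le_or_gt N ⌊(x - m) * n'⌋₊ with hNf | hNf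
        · have hj : j = N := min_eq_left hNf
          rw [hj]
          exact le_trans hx (htmono N (N + 1) (Nat.le_succ N))
        · have hjf : j = ⌊(x - m) * n'⌋₊ := min_eq_right hNf.le
          have hlt : (x - m) * n' < (j : ℝ) + 1 := by
            rw [hjf]
            exact Nat.lt_floor_add_one _
          have h6 : x - m < ((j : ℝ) + 1) * Δ := by
            rw [hΔdef, mul_one_div, lt_div_iff₀ hn']
            exact hlt
          simp only [htdef]
          push_cast
          linarith
      obtain ⟨j', hj'⟩ : ∃ j', j = j' + 1 := ⟨j - 1, (Nat.succ_pred_eq_of_pos hj1).symm⟩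
      rw [hj'] at htj htj1 hjN
      have hform := hPform j' x htj
      have hlow : h (t j') - h (t 0) ≤ P (j' + 1) x := by
        rw [hform]
        have : 0 ≤ s j' * (x - t (j' + 1)) := mul_nonneg (hs0 j') (by linarith)
        linarith
      have ht2 : x - 2 * Δ ≤ t j' := by
        have e1 : t (j' + 1 + 1) = t j' + 2 * Δ := by
          rw [hts (j' + 1), hts j']; ring
        have h7 := htj1
        rw [e1] at h7
        linarith
      have := hmono ht2
      have := hPmono (j' + 1) N x hjN
      linarith
  -- assemble
  refine ⟨N, c, fun i => t (i + 1), hcnn, fun x => hPle N x, ?_⟩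
  intro x hx
  have hxtN : x ≤ t N := by rw [htN]; exact hx
  have h8 := hPlb x hxtN
  have e2 : x - 2 * Δ = x - 2 / n' := by rw [hΔdef]; ring
  have e0 : t 0 = m := by simp [htdef]
  rw [e2, e0] at h8
  exact h8

lemma core_mono (μ ν : MeasureTheory.Measure ℝ) (hμ : MemM μ) (hν : MemM ν)
    (hC : ∀ k, Cpot μ k ≤ Cpot ν k)
    (h : ℝ → ℝ) (h0 : ∀ x, 0 ≤ h x) (hmono : Monotone h)
    (hconv : ConvexOn ℝ Set.univ h) (hlim : Tendsto h atBot (nhds 0))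
    (hiμ : Integrable h μ) (hiν : Integrable h ν) :
    ∫ x, h x ∂μ ≤ ∫ x, h x ∂ν := by
  have hcont : Continuous h := by
    rw [← continuousOn_univ]
    exact hconv.continuousOn isOpen_univ
  choose M cc kk hcnn hle hlb using fun n => approx_ramps h h0 hmono hconv n
  set F : ℕ → ℝ → ℝ := fun n x => ∑ i ∈ Finset.range (M n), cc n i * max (x - kk n i) 0
    with hFdef
  have hFcont : ∀ n, Continuous (F n) := by
    intro n
    apply continuous_finset_sum
    intro i _
    exact continuous_const.mul ((continuous_id.sub continuous_const).max continuous_const)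
  have hFnn : ∀ n x, 0 ≤ F n x := by
    intro n x
    apply Finset.sum_nonneg
    intro i _
    exact mul_nonneg (hcnn n i) (le_max_right _ _)
  have hFle : ∀ n x, F n x ≤ h x := fun n x => hle n x
  -- pointwise convergence
  have hFtend : ∀ x, Tendsto (fun n => F n x) atTop (nhds (h x)) := by
    intro x
    have hlow : Tendsto (fun n : ℕ => h (x - 2 / (n + 1)) - h (-(n + 1 : ℝ))) atTop
        (nhds (h x)) := by
      have t1 : Tendsto (fun n : ℕ => x - 2 / ((n : ℝ) + 1)) atTop (nhds x) := by
        have : Tendsto (fun n : ℕ => 2 / ((n : ℝ) + 1)) atTop (nhds 0) := by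
          have := tendsto_one_div_add_atTop_nhds_zero_nat (𝕜 := ℝ)
          have h2 := this.const_mul (2 : ℝ)
          simpa [div_eq_mul_inv, mul_comm, mul_assoc, mul_left_comm] using h2
        have := tendsto_const_nhds.sub this (f := fun _ : ℕ => x)
        simpa using this
      have t2 : Tendsto (fun n : ℕ => h (x - 2 / ((n : ℝ) + 1))) atTop (nhds (h x)) :=
        (hcont.continuousAt.tendsto).comp t1
      have t3 : Tendsto (fun n : ℕ => -((n : ℝ) + 1)) atTop atBot := by
        apply tendsto_neg_atTop_atBot.comp
        exact tendsto_atTop_add_const_right atTop 1 tendsto_natCast_atTop_atTop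
      have t4 : Tendsto (fun n : ℕ => h (-((n : ℝ) + 1))) atTop (nhds 0) := hlim.comp t3
      have := t2.sub t4
      simpa using this
    apply tendsto_of_tendsto_of_tendsto_of_le_of_le' hlow tendsto_const_nhds
    · filter_upwards [eventually_ge_atTop ⌈x⌉₊] with n hn
      apply hlb n x
      calc x ≤ (⌈x⌉₊ : ℝ) := Nat.le_ceil x
        _ ≤ (n : ℝ) := Nat.cast_le.mpr hn
        _ ≤ (n : ℝ) + 1 := by linarith
    · filter_upwards with n
      exact hFle n x
  -- integrability and integral inequality
  have hFint : ∀ (η : MeasureTheory.Measure ℝ), MemM η → ∀ n, Integrable (F n) η := by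
    intro η hη n
    apply MeasureTheory.integrable_finset_sum
    intro i _
    exact (ramp_integrable η hη (kk n i)).const_mul _
  have hIle : ∀ n, ∫ x, F n x ∂μ ≤ ∫ x, F n x ∂ν := by
    intro n
    have hμi : ∀ i ∈ Finset.range (M n),
        Integrable (fun x => cc n i * max (x - kk n i) 0) μ :=
      fun i _ => (ramp_integrable μ hμ (kk n i)).const_mul _
    have hνi : ∀ i ∈ Finset.range (M n),
        Integrable (fun x => cc n i * max (x - kk n i) 0) ν :=
      fun i _ => (ramp_integrable ν hν (kk n i)).const_mul _
    rw [hFdef]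
    rw [MeasureTheory.integral_finset_sum _ hμi, MeasureTheory.integral_finset_sum _ hνi]
    apply Finset.sum_le_sum
    intro i _
    rw [MeasureTheory.integral_const_mul, MeasureTheory.integral_const_mul]
    exact mul_le_mul_of_nonneg_left (hC (kk n i)) (hcnn n i)
  -- dominated convergence on both sides
  have htμ : Tendsto (fun n => ∫ x, F n x ∂μ) atTop (nhds (∫ x, h x ∂μ)) := by
    apply MeasureTheory.tendsto_integral_of_dominated_convergence h
      (fun n => (hFcont n).aestronglyMeasurable) hiμ
    · intro n
      filter_upwards with x
      rw [Real.norm_eq_abs, abs_of_nonneg (hFnn n x)]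
      exact hFle n x
    · filter_upwards with x
      exact hFtend x
  have htν : Tendsto (fun n => ∫ x, F n x ∂ν) atTop (nhds (∫ x, h x ∂ν)) := by
    apply MeasureTheory.tendsto_integral_of_dominated_convergence h
      (fun n => (hFcont n).aestronglyMeasurable) hiν
    · intro n
      filter_upwards with x
      rw [Real.norm_eq_abs, abs_of_nonneg (hFnn n x)]
      exact hFle n x
    · filter_upwards with x
      exact hFtend x
  exact le_of_tendsto_of_tendsto' htμ htν hIle

/-- Lemma 3.6: under `μ ≤_pcd ν`, `μ ≤_pc ν` holds if and only if `C_μ ≤ C_ν`. -/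
theorem lePC_iff_Cpot_le
    (μ ν : MeasureTheory.Measure ℝ) (hμ : MemM μ) (hν : MemM ν)
    (hpcd : LePCD μ ν) :
    LePC μ ν ↔ ∀ k : ℝ, Cpot μ k ≤ Cpot ν k := by
  constructor
  · intro hpc k
    exact hpc _ (fun x => le_max_right _ _) (ramp_convexOn k)
      (ramp_integrable μ hμ k) (ramp_integrable ν hν k)
  · intro hC f hf0 hfconv hfμ hfν
    haveI : IsFiniteMeasure μ := hμ.1
    haveI : IsFiniteMeasure ν := hν.1
    have hcont : Continuous f := by
      rw [← continuousOn_univ]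
      exact hfconv.continuousOn isOpen_univ
    by_cases hant : Antitone f
    · exact hpcd f hf0 hfconv hant hfμ hfν
    by_cases hm : Monotone f
    · -- monotone case
      have hbdd : BddBelow (Set.range f) := ⟨0, by rintro _ ⟨x, rfl⟩; exact hf0 x⟩
      set L := ⨅ x, f x with hL
      have hL0 : 0 ≤ L := le_ciInf hf0
      have hLle : ∀ x, L ≤ f x := fun x => ciInf_le hbdd x
      set g : ℝ → ℝ := fun x => f x - L with hg
      have hgconv : ConvexOn ℝ Set.univ g := by
        have := hfconv.sub (concaveOn_const L convex_univ)
        exact this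
      have hgtend : Tendsto g atBot (nhds 0) := by
        have h1 := tendsto_atBot_ciInf hm hbdd
        have h2 := h1.sub_const L
        rw [← hL, sub_self] at h2; exact h2
      have hgmono : Monotone g := fun x y hxy => by
        simp only [hg]; linarith [hm hxy]
      have hg0 : ∀ x, 0 ≤ g x := fun x => by simp only [hg]; linarith [hLle x]
      have hgμ : Integrable g μ := hfμ.sub (integrable_const L)
      have hgν : Integrable g ν := hfν.sub (integrable_const L)
      have hcore := core_mono μ ν hμ hν hC g hg0 hgmono hgconv hgtend hgμ hgν
      have hmass : ∫ _ : ℝ, L ∂μ ≤ ∫ _ : ℝ, L ∂ν :=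
        hpcd (fun _ => L) (fun _ => hL0) (convexOn_const L convex_univ) antitone_const
          (integrable_const L) (integrable_const L)
      have e1 : ∫ x, f x ∂μ = (∫ _ : ℝ, L ∂μ) + ∫ x, g x ∂μ := by
        rw [← integral_add (integrable_const L) hgμ]
        congr 1
        funext x
        simp [hg]
      have e2 : ∫ x, f x ∂ν = (∫ _ : ℝ, L ∂ν) + ∫ x, g x ∂ν := by
        rw [← integral_add (integrable_const L) hgν]
        congr 1
        funext x
        simp [hg]
      rw [e1, e2]
      linarith
    · -- neither monotone nor antitone : attains global min
      simp only [Antitone] at hant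
      push_neg at hant
      obtain ⟨a, b, hab, hfab⟩ := hant
      simp only [Monotone] at hm
      push_neg at hm
      obtain ⟨u, v, huv, hfuv⟩ := hm
      have hab' : a < b := by
        rcases lt_or_eq_of_le hab with h | rfl
        · exact h
        · exact absurd hfab (lt_irrefl _)
      have huv' : u < v := by
        rcases lt_or_eq_of_le huv with h | rfl
        · exact h
        · exact absurd hfuv (lt_irrefl _)
      set p := min a u with hp
      set q := max b v with hq
      have hpq : p ≤ q := le_trans (min_le_left a u) (le_trans hab (le_max_left b v))
      obtain ⟨c, hcmem, hcmin⟩ :=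
        isCompact_Icc.exists_isMinOn (nonempty_Icc.mpr hpq) hcont.continuousOn
      have hcmin' : ∀ y ∈ Set.Icc p q, f c ≤ f y := fun y hy => hcmin hy
      have hglobal : ∀ x, f c ≤ f x := by
        intro x
        rcases lt_or_ge x p with hxp | hxp
        · have hpu : p ≤ u := min_le_right a u
          have hs := slope4 hfconv hxp huv' (le_trans hxp.le hpu) (le_trans hpu huv'.le)
          have hneg : (f v - f u) / (v - u) < 0 :=
            div_neg_of_neg_of_pos (by linarith) (by linarith)
          have hlt : (f p - f x) / (p - x) < 0 := lt_of_le_of_lt hs hneg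
          have hfx : f p < f x := by
            by_contra hcon
            push_neg at hcon
            have : 0 ≤ (f p - f x) / (p - x) :=
              div_nonneg (by linarith) (by linarith)
            linarith
          have := hcmin' p ⟨le_refl p, hpq⟩
          linarith
        · rcases le_or_gt x q with hxq | hxq
          · exact hcmin' x ⟨hxp, hxq⟩
          · have hbq : b ≤ q := le_max_left b v
            have hs := slope4 hfconv hab' hxq (le_trans hab'.le hbq) (le_trans hbq hxq.le)
            have hpos : 0 < (f b - f a) / (b - a) :=
              div_pos (by linarith) (by linarith)
            have hlt : 0 < (f x - f q) / (x - q) := lt_of_lt_of_le hpos hs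
            have hfx : f q < f x := by
              by_contra hcon
              push_neg at hcon
              have : (f x - f q) / (x - q) ≤ 0 :=
                div_nonpos_of_nonpos_of_nonneg (by linarith) (by linarith)
              linarith
            have := hcmin' q ⟨hpq, le_refl q⟩
            linarith
      set g : ℝ → ℝ := fun x => f (min x c) with hg
      have hAnti : AntitoneOn f (Set.Iic c) := antitoneOn_of_min hfconv hglobal
      have hMono : MonotoneOn f (Set.Ici c) := monotoneOn_of_min hfconv hglobal
      have hgconv : ConvexOn ℝ Set.univ g := convexOn_min_comp hfconv hAnti
      have hganti : Antitone g := by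
        intro x y hxy
        exact hAnti (Set.mem_Iic.mpr (min_le_right x c)) (Set.mem_Iic.mpr (min_le_right y c))
          (min_le_min hxy (le_refl c))
      have hg0 : ∀ x, 0 ≤ g x := fun x => hf0 _
      have hgcont : Continuous g := hcont.comp (continuous_id.min continuous_const)
      have hgint : ∀ (η : MeasureTheory.Measure ℝ), MemM η → Integrable f η → Integrable g η := by
        intro η hη hfη
        have : IsFiniteMeasure η := hη.1
        have hbound : Integrable (fun x => f x + f c) η := hfη.add (integrable_const _)
        refine hbound.mono hgcont.aestronglyMeasurable ?_
        filter_upwards with x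
        rw [Real.norm_eq_abs, Real.norm_eq_abs, abs_of_nonneg (hg0 x),
          abs_of_nonneg (by linarith [hf0 x, hf0 c] : (0:ℝ) ≤ f x + f c)]
        rcases le_total x c with hxc | hxc
        · rw [hg]; simp only [min_eq_left hxc]; linarith [hf0 c]
        · rw [hg]; simp only [min_eq_right hxc]; linarith [hf0 x]
      have hgμ := hgint μ hμ hfμ
      have hgν := hgint ν hν hfν
      set k : ℝ → ℝ := fun x => f x - g x with hk
      have hkform : ∀ x, k x = f (max x c) - f c := by
        intro x
        rcases le_total x c with hxc | hxc
        · simp only [hk, hg, min_eq_left hxc, max_eq_right hxc, sub_self]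
        · simp only [hk, hg, min_eq_right hxc, max_eq_left hxc]
      have hk0 : ∀ x, 0 ≤ k x := by
        intro x
        rw [hkform]
        linarith [hglobal (max x c)]
      have hkconv : ConvexOn ℝ Set.univ k := by
        have h1 := convexOn_max_comp hfconv hMono
        have h2 := h1.sub (concaveOn_const (f c) convex_univ)
        have : k = fun x => f (max x c) - f c := funext hkform
        rw [this]
        exact h2
      have hkmono : Monotone k := by
        intro x y hxy
        rw [hkform, hkform]
        have := hMono (Set.mem_Ici.mpr (le_max_right x c)) (Set.mem_Ici.mpr (le_max_right y c))
          (max_le_max hxy (le_refl c))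
        linarith
      have hktend : Tendsto k atBot (nhds 0) := by
        apply Tendsto.congr' _ (tendsto_const_nhds (α := ℝ) (f := atBot))
        filter_upwards [eventually_le_atBot c] with x hx
        rw [hkform, max_eq_right hx, sub_self]
      have hkμ : Integrable k μ := hfμ.sub hgμ
      have hkν : Integrable k ν := hfν.sub hgν
      have h1 := hpcd g hg0 hgconv hganti hgμ hgν
      have h2 := core_mono μ ν hμ hν hC k hk0 hkmono hkconv hktend hkμ hkν
      have e1 : ∫ x, f x ∂μ = (∫ x, g x ∂μ) + ∫ x, k x ∂μ := by
        rw [← integral_add hgμ hkμ]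
        congr 1
        funext x
        simp [hk]
      have e2 : ∫ x, f x ∂ν = (∫ x, g x ∂ν) + ∫ x, k x ∂ν := by
        rw [← integral_add hgν hkν]
        congr 1
        funext x
        simp [hk]
      rw [e1, e2]
      linarith
end
end

section
/- Let μ, ν be Borel probability measures on ℝ with finite first moments and μ ≤_cd ν. Then the function c : [0,1] → ℝ, defined by c(u) = sup_{k∈ℝ} (C_{μ_u}(k) − C_ν(k)) for u ∈ (0,1), c(0) = 0 and c(1) = sup_{k∈ℝ} (C_μ(k) − C_ν(k)), is non-decreasing and continuous on [0,1]. -/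
open MeasureTheory Set Filter

noncomputable section

namespace Lem41
open ProbabilityTheory
open scoped ENNReal

variable {μ ν η η₁ η₂ : MeasureTheory.Measure ℝ}

/-! ### quantile facts -/

lemma cdf_toReal [IsProbabilityMeasure μ] (k : ℝ) : (μ (Iic k)).toReal = cdf μ k :=
  (cdf_eq_real μ k).symm

lemma qS_nonempty [IsProbabilityMeasure μ] {u : ℝ} (hu : 0 < u) :
    {k : ℝ | (μ (Iic k)).toReal < u}.Nonempty := by
  have := (tendsto_cdf_atBot μ).eventually (eventually_lt_nhds hu)
  rcases this.exists with ⟨k, hk⟩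
  exact ⟨k, by rwa [mem_setOf_eq, cdf_toReal]⟩

lemma qS_bddAbove [IsProbabilityMeasure μ] {u : ℝ} (hu : u < 1) :
    BddAbove {k : ℝ | (μ (Iic k)).toReal < u} := by
  have := (tendsto_cdf_atTop μ).eventually (eventually_gt_nhds hu)
  rcases this.exists with ⟨K, hK1⟩
  refine ⟨K, fun k hk => ?_⟩
  by_contra h
  push_neg at h
  rw [mem_setOf_eq, cdf_toReal] at hk
  exact absurd (monotone_cdf μ h.le) (by linarith)

lemma quantile_lt_cdf_lt [IsProbabilityMeasure μ] {u : ℝ} (hu : 0 < u) {y : ℝ}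
    (hy : y < quantile μ u) : cdf μ y < u := by
  obtain ⟨s, hs, hys⟩ := exists_lt_of_lt_csSup (qS_nonempty hu) hy
  rw [mem_setOf_eq, cdf_toReal] at hs
  exact lt_of_le_of_lt (monotone_cdf μ hys.le) hs

lemma cdf_quantile_ge [IsProbabilityMeasure μ] {u : ℝ} (hu1 : u < 1) :
    u ≤ cdf μ (quantile μ u) := by
  have hbdd := qS_bddAbove (μ := μ) hu1
  have hev : ∀ k ∈ Ioi (quantile μ u), u ≤ cdf μ k := by
    intro k hk
    by_contra h
    push_neg at h
    have : k ∈ {k : ℝ | (μ (Iic k)).toReal < u} := by rwa [mem_setOf_eq, cdf_toReal]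
    exact absurd (le_csSup hbdd this) (not_le.mpr hk)
  have htendsto : Tendsto (cdf μ) (nhdsWithin (quantile μ u) (Ioi (quantile μ u)))
      (nhds (cdf μ (quantile μ u))) :=
    ((cdf μ).right_continuous _).tendsto.mono_left (nhdsWithin_mono _ Ioi_subset_Ici_self)
  exact ge_of_tendsto htendsto (eventually_nhdsWithin_of_forall hev)

lemma measure_Iic_quantile_ge [IsProbabilityMeasure μ] {u : ℝ} (hu1 : u < 1) :
    ENNReal.ofReal u ≤ μ (Iic (quantile μ u)) := by
  rw [← ofReal_cdf μ]
  exact ENNReal.ofReal_le_ofReal (cdf_quantile_ge hu1)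

lemma measure_Iio_quantile_le [IsProbabilityMeasure μ] {u : ℝ} (hu : 0 < u) :
    μ (Iio (quantile μ u)) ≤ ENNReal.ofReal u := by
  set G := quantile μ u with hG
  have hmono : Monotone (fun n : ℕ => Iic (G - (n + 1 : ℝ)⁻¹)) := by
    intro n m h
    refine Iic_subset_Iic.mpr ?_
    have hnm : (n : ℝ) ≤ m := Nat.cast_le.mpr h
    have : (m + 1 : ℝ)⁻¹ ≤ (n + 1 : ℝ)⁻¹ := inv_anti₀ (by positivity) (by linarith)
    linarith
  have hunion : Iio G = ⋃ n : ℕ, Iic (G - (n + 1 : ℝ)⁻¹) := by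
    ext x
    simp only [mem_Iio, mem_iUnion, mem_Iic]
    constructor
    · intro hx
      obtain ⟨n, hn⟩ := exists_nat_one_div_lt (sub_pos.mpr hx)
      rw [one_div] at hn
      exact ⟨n, by linarith⟩
    · rintro ⟨n, hn⟩
      have : (0:ℝ) < (n + 1 : ℝ)⁻¹ := by positivity
      linarith
  rw [hunion, hmono.measure_iUnion]
  refine iSup_le fun n => ?_
  have h1 : (0:ℝ) < (n + 1 : ℝ)⁻¹ := by positivity
  have h2 : cdf μ (G - (n + 1 : ℝ)⁻¹) < u := quantile_lt_cdf_lt hu (by rw [← hG]; linarith)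
  rw [← ofReal_cdf μ]
  exact ENNReal.ofReal_le_ofReal h2.le

lemma toReal_Iio_quantile_le [IsProbabilityMeasure μ] {u : ℝ} (hu : 0 < u) :
    (μ (Iio (quantile μ u))).toReal ≤ u := by
  have := ENNReal.toReal_mono ENNReal.ofReal_ne_top (measure_Iio_quantile_le (μ := μ) hu)
  rwa [ENNReal.toReal_ofReal hu.le] at this

lemma quantile_mono [IsProbabilityMeasure μ] {u v : ℝ} (hu : 0 < u) (huv : u ≤ v) (hv1 : v < 1) :
    quantile μ u ≤ quantile μ v :=
  csSup_le_csSup (qS_bddAbove hv1) (qS_nonempty hu) (fun _ hk => lt_of_lt_of_le hk huv)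

/-! ### muU facts -/

lemma muU_of_nonpos {u : ℝ} (h : u ≤ 0) : muU μ u = 0 := if_pos h

lemma muU_of_one_le {u : ℝ} (h : 1 ≤ u) : muU μ u = μ := by
  rw [muU, if_neg (by linarith), if_pos h]

lemma muU_eq {u : ℝ} (h0 : 0 < u) (h1 : u < 1) :
    muU μ u = μ.restrict (Iio (quantile μ u)) +
      (ENNReal.ofReal (u - (μ (Iio (quantile μ u))).toReal)) • Measure.dirac (quantile μ u) := by
  rw [muU, if_neg (by linarith), if_neg (by linarith)]

lemma smul_dirac_mono {c d : ℝ≥0∞} (h : c ≤ d) (a : ℝ) :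
    c • Measure.dirac a ≤ d • Measure.dirac a := by
  intro s
  simp only [Measure.smul_apply, smul_eq_mul]
  exact mul_le_mul_left h _

lemma muU_le_restrict_Iic [IsProbabilityMeasure μ] {u : ℝ} (h0 : 0 < u) (h1 : u < 1) :
    muU μ u ≤ μ.restrict (Iic (quantile μ u)) := by
  set G := quantile μ u with hG
  set a := (μ (Iio G)).toReal with ha
  have ha0 : 0 ≤ a := ENNReal.toReal_nonneg
  have hua : a ≤ u := toReal_Iio_quantile_le h0
  have hIic : μ.restrict (Iic G) = μ.restrict (Iio G) + μ.restrict {G} := by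
    rw [← Measure.restrict_union (by simp) (measurableSet_singleton G), Iio_union_right]
  rw [muU_eq h0 h1, hIic, ← hG, Measure.restrict_singleton]
  refine add_le_add le_rfl (smul_dirac_mono ?_ G)
  have hsplit : μ (Iic G) = μ (Iio G) + μ {G} := by
    rw [← Iio_union_right, measure_union (by simp) (measurableSet_singleton G)]
  have hIio : μ (Iio G) = ENNReal.ofReal a := (ENNReal.ofReal_toReal (measure_ne_top μ _)).symm
  have hkey : ENNReal.ofReal u ≤ ENNReal.ofReal a + μ {G} := by
    rw [← hIio, ← hsplit]; exact measure_Iic_quantile_ge h1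
  have hsum : ENNReal.ofReal (u - a) + ENNReal.ofReal a ≤ ENNReal.ofReal a + μ {G} := by
    rw [← ENNReal.ofReal_add (by linarith) ha0, sub_add_cancel]
    exact hkey
  rwa [add_comm (ENNReal.ofReal (u - a)), ENNReal.add_le_add_iff_left ENNReal.ofReal_ne_top]
    at hsum

lemma restrict_Iio_le_muU {u : ℝ} (h0 : 0 < u) (h1 : u < 1) :
    μ.restrict (Iio (quantile μ u)) ≤ muU μ u := by
  rw [muU_eq h0 h1]
  exact Measure.le_add_right le_rfl

lemma muU_le_self [IsProbabilityMeasure μ] (u : ℝ) : muU μ u ≤ μ := by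
  rcases le_or_gt u 0 with h | h
  · rw [muU_of_nonpos h]; exact Measure.zero_le μ
  rcases le_or_gt 1 u with h1 | h1
  · rw [muU_of_one_le h1]
  · exact le_trans (muU_le_restrict_Iic h h1) Measure.restrict_le_self

lemma muU_mono [IsProbabilityMeasure μ] {u v : ℝ} (huv : u ≤ v) : muU μ u ≤ muU μ v := by
  rcases le_or_gt u 0 with h | h
  · rw [muU_of_nonpos h]; exact Measure.zero_le _
  rcases le_or_gt 1 v with hv1 | hv1
  · rw [muU_of_one_le hv1]; exact muU_le_self u
  have hv0 : 0 < v := lt_of_lt_of_le h huv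
  have hu1 : u < 1 := lt_of_le_of_lt huv hv1
  have hGG : quantile μ u ≤ quantile μ v := quantile_mono h huv hv1
  rcases eq_or_lt_of_le hGG with heq | hlt
  · rw [muU_eq h hu1, muU_eq hv0 hv1, ← heq]
    refine add_le_add le_rfl (smul_dirac_mono (ENNReal.ofReal_le_ofReal (by linarith)) _)
  · calc muU μ u ≤ μ.restrict (Iic (quantile μ u)) := muU_le_restrict_Iic h hu1
      _ ≤ μ.restrict (Iio (quantile μ v)) :=
        Measure.restrict_mono (fun x hx => lt_of_le_of_lt hx hlt) le_rfl
      _ ≤ muU μ v := restrict_Iio_le_muU hv0 hv1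

lemma muU_univ [IsProbabilityMeasure μ] {u : ℝ} (h0 : 0 ≤ u) (h1 : u ≤ 1) :
    muU μ u univ = ENNReal.ofReal u := by
  rcases eq_or_lt_of_le h0 with h | h
  · rw [← h, muU_of_nonpos le_rfl]; simp
  rcases eq_or_lt_of_le h1 with h1' | h1'
  · rw [h1', muU_of_one_le le_rfl]; simp
  rw [muU_eq h h1']
  set a := (μ (Iio (quantile μ u))).toReal with hA
  have hua : a ≤ u := toReal_Iio_quantile_le h
  have hIio : μ (Iio (quantile μ u)) = ENNReal.ofReal a :=
    (ENNReal.ofReal_toReal (measure_ne_top μ _)).symm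
  simp only [Measure.add_apply, Measure.smul_apply, Measure.restrict_apply MeasurableSet.univ,
    univ_inter, Measure.dirac_apply_of_mem (mem_univ _), smul_eq_mul, mul_one]
  rw [hIio, ← ENNReal.ofReal_add ENNReal.toReal_nonneg (by linarith), add_sub_cancel]

/-! ### integrability -/

lemma integrable_cpot [IsFiniteMeasure μ] (hμ : Integrable (fun x : ℝ => x) μ)
    (hle : η ≤ μ) (k : ℝ) : Integrable (fun x => max (x - k) 0) η :=
  ((hμ.sub (integrable_const k)).pos_part).mono_measure hle

lemma integrable_ppot [IsFiniteMeasure μ] (hμ : Integrable (fun x : ℝ => x) μ)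
    (hle : η ≤ μ) (k : ℝ) : Integrable (fun x => max (k - x) 0) η :=
  (((integrable_const k).sub hμ).pos_part).mono_measure hle

lemma integrable_tail [IsFiniteMeasure μ] (hμ : Integrable (fun x : ℝ => x) μ)
    (hle : η ≤ μ) (R : ℝ) : Integrable (fun x => max (|x| - R) 0) η :=
  ((hμ.abs.sub (integrable_const R)).pos_part).mono_measure hle

lemma integrable_id' (hμ : Integrable (fun x : ℝ => x) μ) (hle : η ≤ μ) :
    Integrable (fun x : ℝ => x) η := hμ.mono_measure hle

/-! ### basic Cpot/Ppot facts -/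

lemma cpot_nonneg (η : Measure ℝ) (k : ℝ) : 0 ≤ Cpot η k :=
  integral_nonneg fun _ => le_max_right _ _

lemma ppot_nonneg (η : Measure ℝ) (k : ℝ) : 0 ≤ Ppot η k :=
  integral_nonneg fun _ => le_max_right _ _

lemma cpot_mono_measure [IsFiniteMeasure μ] (hμ : Integrable (fun x : ℝ => x) μ)
    (h12 : η₁ ≤ η₂) (h2 : η₂ ≤ μ) (k : ℝ) : Cpot η₁ k ≤ Cpot η₂ k :=
  integral_mono_measure h12 (Eventually.of_forall fun _ => le_max_right _ _)
    (integrable_cpot hμ h2 k)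

lemma ppot_mono_measure [IsFiniteMeasure μ] (hμ : Integrable (fun x : ℝ => x) μ)
    (h12 : η₁ ≤ η₂) (h2 : η₂ ≤ μ) (k : ℝ) : Ppot η₁ k ≤ Ppot η₂ k :=
  integral_mono_measure h12 (Eventually.of_forall fun _ => le_max_right _ _)
    (integrable_ppot hμ h2 k)

lemma cpot_eq_ppot [IsFiniteMeasure μ] (hμ : Integrable (fun x : ℝ => x) μ)
    (hle : η ≤ μ) (k : ℝ) :
    Cpot η k = Ppot η k + ∫ x, x ∂η - k * (η univ).toReal := by
  have : IsFiniteMeasure η := isFiniteMeasure_of_le μ hle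
  have hfun : (fun x : ℝ => max (x - k) 0) = fun x => max (k - x) 0 + (x - k) := by
    funext x
    rcases le_total k x with h | h
    · rw [max_eq_left (by linarith), max_eq_right (by linarith)]; ring
    · rw [max_eq_right (by linarith), max_eq_left (by linarith)]; ring
  rw [Cpot, hfun, integral_add (integrable_ppot hμ hle k)
    (show Integrable (fun x : ℝ => x - k) η from (integrable_id' hμ hle).sub (integrable_const k)),
    integral_sub (integrable_id' hμ hle) (integrable_const k), integral_const, smul_eq_mul]
  rw [Ppot, measureReal_def]; ring

/-! ### limits -/

lemma tendsto_ppot_atBot [IsFiniteMeasure μ] (hμ : Integrable (fun x : ℝ => x) μ) :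
    Tendsto (Ppot μ) atBot (nhds 0) := by
  have h := tendsto_integral_filter_of_dominated_convergence (μ := μ)
    (F := fun (k : ℝ) x => max (k - x) 0) (f := fun _ => (0:ℝ)) (l := atBot) (fun x => |x|)
    ?_ ?_ hμ.abs ?_
  · unfold Ppot; simpa using h
  · filter_upwards with k
    exact ((continuous_const.sub continuous_id).max continuous_const).aestronglyMeasurable
  · filter_upwards [eventually_le_atBot (0:ℝ)] with k hk
    filter_upwards with x
    rw [Real.norm_eq_abs, abs_of_nonneg (le_max_right _ _)]
    refine max_le ?_ (abs_nonneg x)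
    cases abs_cases x with
    | inl h => nlinarith
    | inr h => nlinarith
  · filter_upwards with x
    apply Tendsto.congr' (f₁ := fun _ => (0:ℝ)) _ tendsto_const_nhds
    filter_upwards [eventually_le_atBot x] with k hk
    rw [max_eq_right (by linarith)]

lemma tendsto_cpot_atTop [IsFiniteMeasure μ] (hμ : Integrable (fun x : ℝ => x) μ) :
    Tendsto (Cpot μ) atTop (nhds 0) := by
  have h := tendsto_integral_filter_of_dominated_convergence (μ := μ)
    (F := fun (k : ℝ) x => max (x - k) 0) (f := fun _ => (0:ℝ)) (l := atTop) (fun x => |x|)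
    ?_ ?_ hμ.abs ?_
  · unfold Cpot; simpa using h
  · filter_upwards with k
    exact ((continuous_id.sub continuous_const).max continuous_const).aestronglyMeasurable
  · filter_upwards [eventually_ge_atTop (0:ℝ)] with k hk
    filter_upwards with x
    rw [Real.norm_eq_abs, abs_of_nonneg (le_max_right _ _)]
    refine max_le ?_ (abs_nonneg x)
    cases abs_cases x with
    | inl h => nlinarith
    | inr h => nlinarith
  · filter_upwards with x
    apply Tendsto.congr' (f₁ := fun _ => (0:ℝ)) _ tendsto_const_nhds
    filter_upwards [eventually_ge_atTop x] with k hk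
    rw [max_eq_right (by linarith)]

lemma tendsto_tail_atTop [IsFiniteMeasure μ] (hμ : Integrable (fun x : ℝ => x) μ) :
    Tendsto (fun R : ℝ => ∫ x, max (|x| - R) 0 ∂μ) atTop (nhds 0) := by
  have h := tendsto_integral_filter_of_dominated_convergence (μ := μ)
    (F := fun (R : ℝ) x => max (|x| - R) 0) (f := fun _ => (0:ℝ)) (l := atTop) (fun x => |x|)
    ?_ ?_ hμ.abs ?_
  · simpa using h
  · filter_upwards with R
    exact ((continuous_abs.sub continuous_const).max continuous_const).aestronglyMeasurable
  · filter_upwards [eventually_ge_atTop (0:ℝ)] with R hR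
    filter_upwards with x
    rw [Real.norm_eq_abs, abs_of_nonneg (le_max_right _ _)]
    exact max_le (by linarith [abs_nonneg x]) (abs_nonneg x)
  · filter_upwards with x
    apply Tendsto.congr' (f₁ := fun _ => (0:ℝ)) _ tendsto_const_nhds
    filter_upwards [eventually_ge_atTop (|x|)] with R hR
    rw [max_eq_right (by linarith)]

/-! ### consequences of ≤cd -/

lemma convexOn_ppot_fn (k : ℝ) : ConvexOn ℝ univ (fun x : ℝ => max (k - x) 0) := by
  refine ⟨convex_univ, fun x _ y _ a b ha hb hab => ?_⟩
  simp only [smul_eq_mul]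
  refine max_le ?_ (by positivity)
  have h1 : k - (a * x + b * y) = a * (k - x) + b * (k - y) := by linear_combination (-k) * hab
  rw [h1]
  exact add_le_add (mul_le_mul_of_nonneg_left (le_max_left _ _) ha)
    (mul_le_mul_of_nonneg_left (le_max_left _ _) hb)

lemma antitone_ppot_fn (k : ℝ) : Antitone (fun x : ℝ => max (k - x) 0) := by
  intro x y h
  exact max_le_max (by linarith) le_rfl

lemma convexOn_neg_id : ConvexOn ℝ univ (fun x : ℝ => -x) := by
  refine ⟨convex_univ, fun x _ y _ a b _ _ _ => ?_⟩
  simp only [smul_eq_mul]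
  have h : -(a * x + b * y) = a * -x + b * -y := by ring
  linarith [h.le]

lemma antitone_neg_id : Antitone (fun x : ℝ => -x) := fun x y h => by dsimp; linarith

lemma ppot_le_ppot [IsFiniteMeasure μ] [IsFiniteMeasure ν]
    (hμ : Integrable (fun x : ℝ => x) μ) (hν : Integrable (fun x : ℝ => x) ν)
    (hcd : LeCD μ ν) (k : ℝ) : Ppot μ k ≤ Ppot ν k :=
  hcd _ (convexOn_ppot_fn k) (antitone_ppot_fn k)
    (integrable_ppot hμ le_rfl k) (integrable_ppot hν le_rfl k)

lemma mean_le_mean [IsFiniteMeasure μ] [IsFiniteMeasure ν]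
    (hμ : Integrable (fun x : ℝ => x) μ) (hν : Integrable (fun x : ℝ => x) ν)
    (hcd : LeCD μ ν) : ∫ x, x ∂ν ≤ ∫ x, x ∂μ := by
  have := hcd _ convexOn_neg_id antitone_neg_id hμ.neg hν.neg
  rw [integral_neg, integral_neg] at this
  linarith

end Lem41
namespace Lem41

/-! ### the function cFun -/

def cFun (μ ν : MeasureTheory.Measure ℝ) (u : ℝ) : ℝ :=
  if u ≤ 0 then 0 else ⨆ k : ℝ, (Cpot (muU μ u) k - Cpot ν k)

variable {μ ν : MeasureTheory.Measure ℝ}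

lemma theta_decomp [IsProbabilityMeasure μ] {u v : ℝ} (h0 : 0 ≤ u) (huv : u ≤ v) (h1 : v ≤ 1) :
    ∃ θ : Measure ℝ, muU μ v = muU μ u + θ ∧ θ ≤ μ ∧ (θ univ).toReal = v - u := by
  have hle : muU μ u ≤ muU μ v := muU_mono huv
  have hfin : IsFiniteMeasure (muU μ u) := isFiniteMeasure_of_le μ (muU_le_self u)
  refine ⟨muU μ v - muU μ u, ?_, ?_, ?_⟩
  · rw [add_comm]
    exact (Measure.sub_add_cancel_of_le hle).symm
  · exact le_trans Measure.sub_le (muU_le_self v)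
  · rw [Measure.sub_apply MeasurableSet.univ hle, muU_univ (le_trans h0 huv) h1,
      muU_univ h0 (le_trans huv h1), ← ENNReal.ofReal_sub _ h0,
      ENNReal.toReal_ofReal (by linarith)]

lemma cpot_diff_le_delta [IsProbabilityMeasure μ] [IsProbabilityMeasure ν]
    (hμ : Integrable (fun x : ℝ => x) μ) (hν : Integrable (fun x : ℝ => x) ν)
    (hcd : LeCD μ ν) (k : ℝ) : Cpot μ k - Cpot ν k ≤ ∫ x, x ∂μ - ∫ x, x ∂ν := by
  rw [cpot_eq_ppot hμ le_rfl k, cpot_eq_ppot hν le_rfl k]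
  simp only [measure_univ, ENNReal.toReal_one, mul_one]
  have := ppot_le_ppot hμ hν hcd k
  linarith

lemma bddAbove_phi [IsProbabilityMeasure μ] [IsProbabilityMeasure ν]
    (hμ : Integrable (fun x : ℝ => x) μ) (hν : Integrable (fun x : ℝ => x) ν)
    (hcd : LeCD μ ν) (u : ℝ) :
    BddAbove (Set.range fun k => Cpot (muU μ u) k - Cpot ν k) := by
  refine ⟨∫ x, x ∂μ - ∫ x, x ∂ν, ?_⟩
  rintro _ ⟨k, rfl⟩
  have h1 : Cpot (muU μ u) k ≤ Cpot μ k := cpot_mono_measure hμ (muU_le_self u) le_rfl k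
  have h2 := cpot_diff_le_delta hμ hν hcd k
  dsimp only
  linarith

lemma phi_le_cFun [IsProbabilityMeasure μ] [IsProbabilityMeasure ν]
    (hμ : Integrable (fun x : ℝ => x) μ) (hν : Integrable (fun x : ℝ => x) ν)
    (hcd : LeCD μ ν) (u k : ℝ) : Cpot (muU μ u) k - Cpot ν k ≤ cFun μ ν u := by
  rcases le_or_gt u 0 with h | h
  · rw [cFun, if_pos h, muU_of_nonpos h]
    have : Cpot 0 k = 0 := by simp [Cpot]
    rw [this]
    have := cpot_nonneg ν k
    linarith
  · rw [cFun, if_neg (not_le.mpr h)]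
    exact le_ciSup (bddAbove_phi hμ hν hcd u) k

lemma cFun_nonneg [IsProbabilityMeasure μ] [IsProbabilityMeasure ν]
    (hμ : Integrable (fun x : ℝ => x) μ) (hν : Integrable (fun x : ℝ => x) ν)
    (hcd : LeCD μ ν) (u : ℝ) : 0 ≤ cFun μ ν u := by
  have hub : ∀ k : ℝ, -Cpot ν k ≤ cFun μ ν u := by
    intro k
    have h1 := cpot_nonneg (muU μ u) k
    have := phi_le_cFun hμ hν hcd u k
    linarith
  have htend : Tendsto (fun k : ℝ => -Cpot ν k) atTop (nhds 0) := by
    simpa using (tendsto_cpot_atTop hν).neg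
  exact le_of_tendsto' htend hub

lemma cFun_mono [IsProbabilityMeasure μ] [IsProbabilityMeasure ν]
    (hμ : Integrable (fun x : ℝ => x) μ) (hν : Integrable (fun x : ℝ => x) ν)
    (hcd : LeCD μ ν) {u v : ℝ} (huv : u ≤ v) : cFun μ ν u ≤ cFun μ ν v := by
  rcases le_or_gt u 0 with h | h
  · rw [cFun, if_pos h]
    exact cFun_nonneg hμ hν hcd v
  · have hv : 0 < v := lt_of_lt_of_le h huv
    rw [cFun, if_neg (not_le.mpr h), cFun, if_neg (not_le.mpr hv)]
    refine ciSup_mono (bddAbove_phi hμ hν hcd v) (fun k => ?_)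
    have := cpot_mono_measure hμ (muU_mono huv) (muU_le_self v) k
    linarith

lemma cFun_one [IsProbabilityMeasure μ] [IsProbabilityMeasure ν]
    (hμ : Integrable (fun x : ℝ => x) μ) (hν : Integrable (fun x : ℝ => x) ν)
    (hcd : LeCD μ ν) : cFun μ ν 1 = ∫ x, x ∂μ - ∫ x, x ∂ν := by
  rw [cFun, if_neg (by norm_num), muU_of_one_le le_rfl]
  refine le_antisymm (ciSup_le (cpot_diff_le_delta hμ hν hcd)) ?_
  have hub : ∀ k : ℝ, (∫ x, x ∂μ - ∫ x, x ∂ν) - Ppot ν k ≤ ⨆ k : ℝ, (Cpot μ k - Cpot ν k) := by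
    intro k
    have h1 : Cpot μ k - Cpot ν k ≤ ⨆ k : ℝ, (Cpot μ k - Cpot ν k) := by
      have h2 := le_ciSup (bddAbove_phi hμ hν hcd 1) k
      rwa [muU_of_one_le le_rfl] at h2
    have h3 : Cpot μ k = Ppot μ k + ∫ x, x ∂μ - k * 1 := by
      have := cpot_eq_ppot hμ le_rfl k
      simpa [measure_univ] using this
    have h4 : Cpot ν k = Ppot ν k + ∫ x, x ∂ν - k * 1 := by
      have := cpot_eq_ppot hν le_rfl k
      simpa [measure_univ] using this
    have h5 := ppot_nonneg μ k
    linarith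
  have htend : Tendsto (fun k : ℝ => (∫ x, x ∂μ - ∫ x, x ∂ν) - Ppot ν k) atBot
      (nhds (∫ x, x ∂μ - ∫ x, x ∂ν)) := by
    simpa using (tendsto_ppot_atBot hν).const_sub (∫ x, x ∂μ - ∫ x, x ∂ν)
  exact le_of_tendsto' htend hub

lemma mul_le_of_le_div' {D t ε : ℝ} (hD : 0 ≤ D) (ht0 : 0 ≤ t) (hε : 0 ≤ ε)
    (ht : t ≤ ε / (D + 1)) : D * t ≤ ε := by
  have hD1 : (0:ℝ) < D + 1 := by linarith
  have h1 : D * t ≤ D * (ε / (D + 1)) := mul_le_mul_of_nonneg_left ht hD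
  have h2 : D * (ε / (D + 1)) ≤ ε := by
    rw [mul_comm, div_mul_eq_mul_div, div_le_iff₀ hD1]
    nlinarith
  linarith

end Lem41
namespace Lem41

variable {μ ν : MeasureTheory.Measure ℝ}

lemma pointwise_cpot_bound {k K R x : ℝ} (hkK : K ≤ k) (hK : K ≤ 0) (hR : 0 ≤ R) :
    max (x - k) 0 ≤ (R - K) + max (|x| - R) 0 := by
  have habs : |x| ≤ R + max (|x| - R) 0 := by
    rcases le_total (|x|) R with h | h
    · nlinarith [le_max_right (|x| - R) (0:ℝ)]
    · nlinarith [le_max_left (|x| - R) (0:ℝ)]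
  refine max_le ?_ (by nlinarith [le_max_right (|x| - R) (0:ℝ)])
  have := le_abs_self x
  linarith

lemma cFun_E1 [IsProbabilityMeasure μ] [IsProbabilityMeasure ν]
    (hμ : Integrable (fun x : ℝ => x) μ) (hν : Integrable (fun x : ℝ => x) ν)
    (hcd : LeCD μ ν) {w ε : ℝ} (hw : 0 ≤ w) (hw1 : w < 1) (hε : 0 < ε) :
    ∃ δ > 0, ∀ u v : ℝ, 0 ≤ u → u ≤ v → v ≤ w + δ → v - u ≤ δ →
      cFun μ ν v - cFun μ ν u ≤ ε := by
  set B : ℝ := ∫ x, |x| ∂μ + |∫ x, x ∂ν| + 1 with hB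
  -- choose K
  obtain ⟨K₀, hK₀⟩ : ∃ K₀ : ℝ, ∀ k ≤ K₀, Ppot μ k < ε / 2 :=
    eventually_atBot.mp ((tendsto_ppot_atBot hμ).eventually (eventually_lt_nhds (half_pos hε)))
  set K : ℝ := min K₀ (min 0 ((ε / 2 - B) * (2 / (1 - w)))) with hKdef
  have hK_le0 : K ≤ 0 := le_trans (min_le_right _ _) (min_le_left _ _)
  have hK_K0 : K ≤ K₀ := min_le_left _ _
  have hw2 : (0:ℝ) < 1 - w := by linarith
  have hKB : B + K * ((1 - w) / 2) ≤ ε / 2 := by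
    have h2 : K ≤ (ε / 2 - B) * (2 / (1 - w)) :=
      le_trans (min_le_right _ _) (min_le_right _ _)
    have h3 := mul_le_mul_of_nonneg_right h2 (by positivity : (0:ℝ) ≤ (1 - w) / 2)
    have h4 : (2 / (1 - w)) * ((1 - w) / 2) = 1 := by
      field_simp
    rw [mul_assoc, h4, mul_one] at h3
    linarith
  -- choose R
  obtain ⟨R₀, hR₀⟩ : ∃ R₀ : ℝ, ∀ r ≥ R₀, (∫ x, max (|x| - r) 0 ∂μ) < ε / 2 :=
    eventually_atTop.mp ((tendsto_tail_atTop hμ).eventually (eventually_lt_nhds (half_pos hε)))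
  set R : ℝ := max R₀ 0 with hRdef
  have hR0 : 0 ≤ R := le_max_right _ _
  have htail : (∫ x, max (|x| - R) 0 ∂μ) < ε / 2 := hR₀ R (le_max_left _ _)
  -- choose δ
  have hRK1 : (0:ℝ) < R - K + 1 := by linarith
  refine ⟨min ((1 - w) / 2) ((ε / 2) / (R - K + 1)),
    lt_min (by linarith) (div_pos (half_pos hε) hRK1), ?_⟩
  intro u v hu0 huv hvw hvu
  set δ : ℝ := min ((1 - w) / 2) ((ε / 2) / (R - K + 1)) with hδdef
  rcases le_or_gt v 0 with hv0 | hv0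
  · rw [cFun, if_pos hv0, cFun, if_pos (le_trans huv hv0)]
    linarith
  have hδ1 : δ ≤ (1 - w) / 2 := min_le_left _ _
  have hδ2 : δ ≤ (ε / 2) / (R - K + 1) := min_le_right _ _
  have hv1 : v < 1 := by linarith
  obtain ⟨θ, hdec, hθμ, hmass⟩ := theta_decomp (μ := μ) hu0 huv hv1.le
  have hθfin : IsFiniteMeasure θ := isFiniteMeasure_of_le μ hθμ
  have hmuUuμ : muU μ u ≤ μ := muU_le_self u
  have hcFv : cFun μ ν v = ⨆ k : ℝ, (Cpot (muU μ v) k - Cpot ν k) := by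
    rw [cFun, if_neg (not_le.mpr hv0)]
  rw [hcFv, sub_le_iff_le_add]
  refine ciSup_le fun k => ?_
  rcases le_total K k with hkK | hkK
  · -- k ≥ K
    have hsplit : Cpot (muU μ v) k = Cpot (muU μ u) k + ∫ x, max (x - k) 0 ∂θ := by
      rw [Cpot, hdec, integral_add_measure (integrable_cpot hμ hmuUuμ k)
        (integrable_cpot hμ hθμ k)]
      rfl
    have hθbound : ∫ x, max (x - k) 0 ∂θ ≤ (R - K) * (v - u) + ∫ x, max (|x| - R) 0 ∂μ := by
      have h1 : ∫ x, max (x - k) 0 ∂θ ≤ ∫ x, ((R - K) + max (|x| - R) 0) ∂θ :=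
        integral_mono (integrable_cpot hμ hθμ k)
          ((integrable_const _).add (integrable_tail hμ hθμ R))
          (fun x => pointwise_cpot_bound hkK hK_le0 hR0)
      have h2 : ∫ x, ((R - K) + max (|x| - R) 0) ∂θ
          = (R - K) * (v - u) + ∫ x, max (|x| - R) 0 ∂θ := by
        rw [integral_add (integrable_const _) (integrable_tail hμ hθμ R), integral_const,
          smul_eq_mul, measureReal_def, hmass, mul_comm]
      have h3 : ∫ x, max (|x| - R) 0 ∂θ ≤ ∫ x, max (|x| - R) 0 ∂μ :=
        integral_mono_measure hθμ (Eventually.of_forall fun _ => le_max_right _ _)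
          (integrable_tail hμ le_rfl R)
      linarith
    have hφu := phi_le_cFun hμ hν hcd u k
    have hRKvu : (R - K) * (v - u) ≤ ε / 2 :=
      mul_le_of_le_div' (by linarith) (by linarith) (half_pos hε).le (le_trans hvu hδ2)
    have : Cpot (muU μ v) k - Cpot ν k
        = (Cpot (muU μ u) k - Cpot ν k) + ∫ x, max (x - k) 0 ∂θ := by
      rw [hsplit]; ring
    rw [this]
    linarith
  · -- k ≤ K
    have huniv : ((muU μ v) univ).toReal = v := by
      rw [muU_univ hv0.le hv1.le, ENNReal.toReal_ofReal hv0.le]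
    have h1 : Cpot (muU μ v) k = Ppot (muU μ v) k + ∫ x, x ∂(muU μ v) - k * v := by
      rw [cpot_eq_ppot hμ (muU_le_self v) k, huniv]
    have h2 : Cpot ν k = Ppot ν k + ∫ x, x ∂ν - k * 1 := by
      have := cpot_eq_ppot hν le_rfl k
      simpa [measure_univ] using this
    have h3 : Ppot (muU μ v) k ≤ Ppot μ k := ppot_mono_measure hμ (muU_le_self v) le_rfl k
    have h4 : Ppot μ k < ε / 2 := hK₀ k (le_trans hkK hK_K0)
    have h5 : ∫ x, x ∂(muU μ v) ≤ ∫ x, |x| ∂μ := by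
      have h5a : ∫ x, x ∂(muU μ v) ≤ ∫ x, |x| ∂(muU μ v) :=
        integral_mono (integrable_id' hμ (muU_le_self v)) (hμ.abs.mono_measure (muU_le_self v))
          (fun x => le_abs_self x)
      have h5b : ∫ x, |x| ∂(muU μ v) ≤ ∫ x, |x| ∂μ :=
        integral_mono_measure (muU_le_self v) (Eventually.of_forall fun x => abs_nonneg x) hμ.abs
      linarith
    have h6 : -∫ x, x ∂ν ≤ |∫ x, x ∂ν| := neg_le_abs _
    have h7 : Ppot ν k ≥ 0 := ppot_nonneg ν k
    have h8 : k * (1 - v) ≤ K * ((1 - w) / 2) := by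
      have hq1 : (1 - w) / 2 ≤ 1 - v := by linarith
      have hq2 : k * (1 - v) ≤ K * (1 - v) :=
        mul_le_mul_of_nonneg_right hkK (by linarith)
      have hq3 : K * (1 - v) ≤ K * ((1 - w) / 2) := mul_le_mul_of_nonpos_left hq1 hK_le0
      linarith
    have h9 : 0 ≤ cFun μ ν u := cFun_nonneg hμ hν hcd u
    have h10 : Cpot (muU μ v) k - Cpot ν k
        ≤ Ppot μ k + (∫ x, |x| ∂μ + |∫ x, x ∂ν|) + k * (1 - v) := by
      rw [h1, h2]
      have hid : k * 1 - k * v = k * (1 - v) := by ring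
      linarith [hid, h3, h5, h6, h7]
    linarith [h10, h4, h8, hKB, h9]

lemma cFun_E2 [IsProbabilityMeasure μ] [IsProbabilityMeasure ν]
    (hμ : Integrable (fun x : ℝ => x) μ) (hν : Integrable (fun x : ℝ => x) ν)
    (hcd : LeCD μ ν) {ε : ℝ} (hε : 0 < ε) :
    ∃ δ > 0, ∀ u : ℝ, 1 - δ ≤ u → u ≤ 1 → cFun μ ν 1 - cFun μ ν u ≤ ε := by
  have hε4 : 0 < ε / 4 := by linarith
  obtain ⟨K₁, hK₁⟩ : ∃ K₁ : ℝ, ∀ k ≤ K₁, Ppot ν k < ε / 4 :=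
    eventually_atBot.mp ((tendsto_ppot_atBot hν).eventually (eventually_lt_nhds hε4))
  set K : ℝ := min K₁ 0 with hKdef
  have hK0 : K ≤ 0 := min_le_right _ _
  have hKP : Ppot ν K < ε / 4 := hK₁ K (min_le_left _ _)
  obtain ⟨R₀, hR₀⟩ : ∃ R₀ : ℝ, ∀ r ≥ R₀, (∫ x, max (|x| - r) 0 ∂μ) < ε / 4 :=
    eventually_atTop.mp ((tendsto_tail_atTop hμ).eventually (eventually_lt_nhds hε4))
  set R : ℝ := max R₀ 0 with hRdef
  have hR0 : (0:ℝ) ≤ R := le_max_right _ _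
  have htail : (∫ x, max (|x| - R) 0 ∂μ) < ε / 4 := hR₀ R (le_max_left _ _)
  have hKpos : (0:ℝ) < -K + 1 := by linarith
  have hRpos : (0:ℝ) < R + 1 := by linarith
  refine ⟨min (1/2) (min ((ε/4) / (-K + 1)) ((ε/4) / (R + 1))),
    lt_min (by norm_num) (lt_min (div_pos hε4 hKpos) (div_pos hε4 hRpos)), ?_⟩
  set δ : ℝ := min (1/2) (min ((ε/4) / (-K + 1)) ((ε/4) / (R + 1))) with hδdef
  intro u hu1 hu2
  rcases eq_or_lt_of_le hu2 with h | hu2'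
  · rw [h, sub_self]; linarith
  have hδhalf : δ ≤ 1/2 := min_le_left _ _
  have hδK : δ ≤ (ε/4) / (-K + 1) := le_trans (min_le_right _ _) (min_le_left _ _)
  have hδR : δ ≤ (ε/4) / (R + 1) := le_trans (min_le_right _ _) (min_le_right _ _)
  have hu0 : 0 < u := by linarith
  -- decomposition  μ = muU μ u + θ
  obtain ⟨θ, hdec, hθμ, hmass⟩ := theta_decomp (μ := μ) hu0.le hu2 le_rfl
  have hθfin : IsFiniteMeasure θ := isFiniteMeasure_of_le μ hθμ
  rw [muU_of_one_le le_rfl] at hdec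
  have hmuUuμ : muU μ u ≤ μ := muU_le_self u
  have hmv : ∫ x, x ∂μ = ∫ x, x ∂(muU μ u) + ∫ x, x ∂θ := by
    conv_lhs => rw [hdec]
    rw [integral_add_measure (integrable_id' hμ hmuUuμ) (integrable_id' hμ hθμ)]
  have hθx : ∫ x, x ∂θ ≤ R * (1 - u) + ∫ x, max (|x| - R) 0 ∂μ := by
    have h1 : ∫ x, x ∂θ ≤ ∫ x, (R + max (|x| - R) 0) ∂θ := by
      refine integral_mono (integrable_id' hμ hθμ)
        ((integrable_const _).add (integrable_tail hμ hθμ R)) (fun x => ?_)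
      have habs : |x| ≤ R + max (|x| - R) 0 := by
        rcases le_total (|x|) R with h | h
        · nlinarith [le_max_right (|x| - R) (0:ℝ)]
        · nlinarith [le_max_left (|x| - R) (0:ℝ)]
      have := le_abs_self x
      linarith
    have h2 : ∫ x, (R + max (|x| - R) 0) ∂θ = R * (1 - u) + ∫ x, max (|x| - R) 0 ∂θ := by
      rw [integral_add (integrable_const _) (integrable_tail hμ hθμ R), integral_const,
        smul_eq_mul, measureReal_def, hmass, mul_comm]
    have h3 : ∫ x, max (|x| - R) 0 ∂θ ≤ ∫ x, max (|x| - R) 0 ∂μ :=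
      integral_mono_measure hθμ (Eventually.of_forall fun _ => le_max_right _ _)
        (integrable_tail hμ le_rfl R)
    linarith
  have hlow : (∫ x, x ∂(muU μ u) - ∫ x, x ∂ν) + K * (1 - u) - Ppot ν K ≤ cFun μ ν u := by
    have hφ := phi_le_cFun hμ hν hcd u K
    have huniv : ((muU μ u) univ).toReal = u := by
      rw [muU_univ hu0.le hu2, ENNReal.toReal_ofReal hu0.le]
    have h1 : Cpot (muU μ u) K = Ppot (muU μ u) K + ∫ x, x ∂(muU μ u) - K * u := by
      rw [cpot_eq_ppot hμ hmuUuμ K, huniv]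
    have h2 : Cpot ν K = Ppot ν K + ∫ x, x ∂ν - K * 1 := by
      have := cpot_eq_ppot hν le_rfl K
      simpa [measure_univ] using this
    have h3 := ppot_nonneg (muU μ u) K
    have hid : K * (1 - u) = K * 1 - K * u := by ring
    linarith [hφ, h1, h2, h3, hid]
  have hone : cFun μ ν 1 = ∫ x, x ∂μ - ∫ x, x ∂ν := cFun_one hμ hν hcd
  have hRu : R * (1 - u) ≤ ε / 4 :=
    mul_le_of_le_div' hR0 (by linarith) hε4.le (by linarith)
  have hKu : (-K) * (1 - u) ≤ ε / 4 :=
    mul_le_of_le_div' (by linarith) (by linarith) hε4.le (by linarith)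
  rw [hone]
  have hKid : (-K) * (1 - u) = -(K * (1 - u)) := by ring
  linarith [hlow, hmv, hθx, hRu, hKu, hKP, htail, hKid]

lemma cFun_continuousOn [IsProbabilityMeasure μ] [IsProbabilityMeasure ν]
    (hμ : Integrable (fun x : ℝ => x) μ) (hν : Integrable (fun x : ℝ => x) ν)
    (hcd : LeCD μ ν) : ContinuousOn (cFun μ ν) (Icc (0:ℝ) 1) := by
  intro w hw
  rw [Metric.continuousWithinAt_iff]
  intro ε hε
  rcases lt_or_eq_of_le hw.2 with hw1 | hw1
  · obtain ⟨δ, hδ, hE⟩ := cFun_E1 hμ hν hcd hw.1 hw1 (half_pos hε)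
    refine ⟨δ, hδ, ?_⟩
    intro t ht hdist
    rw [Real.dist_eq] at hdist
    rw [Real.dist_eq]
    rcases le_total t w with htw | htw
    · have hvu : w - t ≤ δ := by
        rw [abs_sub_comm] at hdist
        have h2 := le_abs_self (w - t)
        linarith
      have h := hE t w ht.1 htw (by linarith) hvu
      have hord : cFun μ ν t ≤ cFun μ ν w := cFun_mono hμ hν hcd htw
      rw [abs_of_nonpos (by linarith : cFun μ ν t - cFun μ ν w ≤ 0)]
      linarith
    · have h2 := le_abs_self (t - w)
      have h := hE w t hw.1 htw (by linarith) (by linarith)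
      have hord : cFun μ ν w ≤ cFun μ ν t := cFun_mono hμ hν hcd htw
      rw [abs_of_nonneg (by linarith : 0 ≤ cFun μ ν t - cFun μ ν w)]
      linarith
  · subst hw1
    obtain ⟨δ, hδ, hE⟩ := cFun_E2 hμ hν hcd (half_pos hε)
    refine ⟨δ, hδ, ?_⟩
    intro t ht hdist
    rw [Real.dist_eq] at hdist
    rw [Real.dist_eq]
    obtain ⟨hd1, hd2⟩ := abs_lt.mp hdist
    have htd : 1 - δ ≤ t := by linarith
    have h := hE t htd ht.2
    have hord : cFun μ ν t ≤ cFun μ ν 1 := cFun_mono hμ hν hcd ht.2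
    rw [abs_of_nonpos (by linarith)]
    linarith

end Lem41

/-- Lemma 4.1: the function `c(u) = sup_k (C_{μ_u}(k) - C_ν(k))` is
non-decreasing and continuous on `[0,1]`. -/
theorem c_monotone_continuous
    (μ ν : MeasureTheory.Measure ℝ)
    [MeasureTheory.IsProbabilityMeasure μ] [MeasureTheory.IsProbabilityMeasure ν]
    (hμ : MeasureTheory.Integrable (fun x : ℝ => x) μ)
    (hν : MeasureTheory.Integrable (fun x : ℝ => x) ν)
    (hcd : LeCD μ ν)
    (c : ℝ → ℝ)
    (hc0 : c 0 = 0)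
    (hc1 : c 1 = ⨆ k : ℝ, (Cpot μ k - Cpot ν k))
    (hcu : ∀ u ∈ Set.Ioo (0:ℝ) 1, c u = ⨆ k : ℝ, (Cpot (muU μ u) k - Cpot ν k)) :
    MonotoneOn c (Set.Icc (0:ℝ) 1) ∧ ContinuousOn c (Set.Icc (0:ℝ) 1) := by
  classical
  have heq : Set.EqOn c (Lem41.cFun μ ν) (Set.Icc (0:ℝ) 1) := by
    intro u hu
    rcases eq_or_lt_of_le hu.1 with h0 | h0
    · rw [← h0, hc0, Lem41.cFun, if_pos le_rfl]
    rcases eq_or_lt_of_le hu.2 with h1 | h1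
    · rw [h1, hc1, Lem41.cFun, if_neg (by norm_num), Lem41.muU_of_one_le le_rfl]
    · rw [hcu u ⟨h0, h1⟩, Lem41.cFun, if_neg (not_le.mpr h0)]
  constructor
  · intro a ha b hb hab
    rw [heq ha, heq hb]
    exact Lem41.cFun_mono hμ hν hcd hab
  · exact (Lem41.cFun_continuousOn hμ hν hcd).congr heq
end
end

section
/- Let μ, ν be Borel probability measures on ℝ with finite first moments and μ ≤_cd ν, define c(u) = sup_{k∈ℝ} (C_{μ_u}(k) − C_ν(k)) for u ∈ (0,1) with c(0) = 0, and set u* = sup{u ∈ (0,1) : c(u) = 0} (with sup ∅ = 0). Then c is strictly increasing on (u*,1): for all u, v with u* < u < v < 1, c(u) < c(v). -/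
open MeasureTheory Set Filter

noncomputable section

open Topology

namespace CSIhelp

lemma integrable_posp (η : Measure ℝ) [IsFiniteMeasure η]
    (h : Integrable (fun x : ℝ => x) η) (k : ℝ) :
    Integrable (fun x => max (x - k) 0) η := by
  simpa using (h.sub (integrable_const k)).pos_part

lemma integrable_negp (η : Measure ℝ) [IsFiniteMeasure η]
    (h : Integrable (fun x : ℝ => x) η) (k : ℝ) :
    Integrable (fun x => max (k - x) 0) η := by
  simpa using ((integrable_const k).sub h).pos_part

lemma cpot_nonneg (η : Measure ℝ) (k : ℝ) : 0 ≤ Cpot η k :=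
  integral_nonneg fun x => le_max_right _ _

lemma cpot_mono_measure {η χ : Measure ℝ} [IsFiniteMeasure χ] (hle : η ≤ χ)
    (hχ : Integrable (fun x : ℝ => x) χ) (k : ℝ) : Cpot η k ≤ Cpot χ k :=
  integral_mono_measure hle (ae_of_all _ fun x => le_max_right _ _) (integrable_posp χ hχ k)

lemma cpot_eq (η : Measure ℝ) [IsProbabilityMeasure η]
    (h : Integrable (fun x : ℝ => x) η) (k : ℝ) :
    Cpot η k = (∫ x, x ∂η) - k + Ppot η k := by
  have h1 : Integrable (fun x : ℝ => x - k) η := h.sub (integrable_const k)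
  have key : Cpot η k - Ppot η k = ∫ x, (x - k) ∂η := by
    rw [Cpot, Ppot, ← integral_sub (integrable_posp η h k) (integrable_negp η h k)]
    congr 1; ext x
    rcases le_total x k with hx | hx
    · rw [max_eq_right (by linarith), max_eq_left (by linarith)]; ring
    · rw [max_eq_left (by linarith), max_eq_right (by linarith)]; ring
  have h2 : ∫ x, (x - k) ∂η = (∫ x, x ∂η) - k := by
    rw [integral_sub h (integrable_const k), integral_const]
    simp
  linarith [key, h2]

lemma convexOn_negp (k : ℝ) : ConvexOn ℝ Set.univ (fun x : ℝ => max (k - x) 0) := by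
  have h1 : ConvexOn ℝ Set.univ (fun x : ℝ => k - x) := by
    refine ⟨convex_univ, fun x _ y _ a b _ _ hab => le_of_eq ?_⟩
    simp only [smul_eq_mul]
    linear_combination (-k) * hab
  simpa [Pi.sup_def] using h1.sup (convexOn_const 0 convex_univ)

lemma antitone_negp (k : ℝ) : Antitone (fun x : ℝ => max (k - x) 0) :=
  fun x y hxy => max_le_max (by linarith) le_rfl

lemma ppot_le {μ ν : Measure ℝ} [IsProbabilityMeasure μ] [IsProbabilityMeasure ν]
    (hμ : Integrable (fun x : ℝ => x) μ) (hν : Integrable (fun x : ℝ => x) ν)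
    (hcd : LeCD μ ν) (k : ℝ) : Ppot μ k ≤ Ppot ν k :=
  hcd _ (convexOn_negp k) (antitone_negp k) (integrable_negp μ hμ k) (integrable_negp ν hν k)

lemma cpot_tendsto (η : Measure ℝ) [IsFiniteMeasure η]
    (h : Integrable (fun x : ℝ => x) η) :
    Tendsto (fun k => Cpot η k) atTop (𝓝 0) := by
  have h0 : (0:ℝ) = ∫ (x:ℝ), (0:ℝ) ∂η := by simp
  rw [h0]
  refine tendsto_integral_filter_of_dominated_convergence (fun x => |x|)
    (Eventually.of_forall fun k => ?_) ?_ h.abs ?_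
  · exact ((continuous_id.sub continuous_const).max continuous_const).aestronglyMeasurable
  · filter_upwards [eventually_ge_atTop (0:ℝ)] with k hk
    refine ae_of_all _ fun x => ?_
    rw [Real.norm_eq_abs, abs_of_nonneg (le_max_right _ _)]
    rcases le_total x k with hx | hx
    · rw [max_eq_right (by linarith)]; positivity
    · rw [max_eq_left (by linarith)]
      calc x - k ≤ x := by linarith
      _ ≤ |x| := le_abs_self x
  · refine ae_of_all _ fun x => ?_
    refine Tendsto.congr' ?_ tendsto_const_nhds
    filter_upwards [eventually_ge_atTop x] with k hk
    rw [max_eq_right (by linarith)]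

lemma cpot_continuous (η : Measure ℝ) [IsFiniteMeasure η]
    (h : Integrable (fun x : ℝ => x) η) :
    Continuous (fun k => Cpot η k) := by
  refine (LipschitzWith.of_dist_le_mul (K := (η Set.univ).toReal.toNNReal)
    (f := fun k => Cpot η k) fun k1 k2 => ?_).continuous
  simp only [Real.dist_eq, Cpot]
  rw [← integral_sub (integrable_posp η h k1) (integrable_posp η h k2)]
  have := norm_integral_le_of_norm_le_const (μ := η)
    (f := fun x => max (x - k1) 0 - max (x - k2) 0) (C := |k1 - k2|) ?_
  · rw [Real.norm_eq_abs] at this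
    calc |∫ x, (max (x - k1) 0 - max (x - k2) 0) ∂η| ≤ |k1 - k2| * (η Set.univ).toReal := this
    _ = (η Set.univ).toReal.toNNReal * |k1 - k2| := by
        rw [Real.coe_toNNReal _ ENNReal.toReal_nonneg]; ring
  · refine ae_of_all _ fun x => ?_
    rw [Real.norm_eq_abs]
    calc |max (x - k1) 0 - max (x - k2) 0| ≤ |(x - k1) - (x - k2)| :=
          abs_max_sub_max_le_abs _ _ _
    _ = |k1 - k2| := by rw [abs_sub_comm]; ring_nf

lemma cpot_ge (η : Measure ℝ) [IsProbabilityMeasure η]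
    (h : Integrable (fun x : ℝ => x) η) (k : ℝ) :
    (∫ x, x ∂η) - k ≤ Cpot η k := by
  have h1 : Integrable (fun x : ℝ => x - k) η := h.sub (integrable_const k)
  have := integral_mono_ae (f := fun x : ℝ => x - k) (g := fun x => max (x - k) 0)
    h1 (integrable_posp η h k) (ae_of_all _ fun x => le_max_left (x - k) 0)
  have h2 : ∫ x, (x - k) ∂η = (∫ x, x ∂η) - k := by
    rw [integral_sub h (integrable_const k), integral_const]; simp
  rw [h2] at this; exact this

end CSIhelp

namespace CSIhelp

variable {μ : Measure ℝ} [IsProbabilityMeasure μ]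

lemma cdfR_mono : Monotone (fun k => (μ (Set.Iic k)).toReal) := fun a b hab =>
  ENNReal.toReal_mono (measure_ne_top μ _) (measure_mono (Set.Iic_subset_Iic.2 hab))

lemma qset_nonempty {u : ℝ} (hu : 0 < u) :
    {k : ℝ | (μ (Set.Iic k)).toReal < u}.Nonempty := by
  have hs : Antitone (fun n : ℕ => Set.Iic (-(n:ℝ))) := fun a b hab =>
    Set.Iic_subset_Iic.2 (by exact_mod_cast neg_le_neg (by exact_mod_cast hab))
  have hInter : (⋂ n : ℕ, Set.Iic (-(n:ℝ))) = ∅ := by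
    ext x
    simp only [Set.mem_iInter, Set.mem_Iic, Set.mem_empty_iff_false, iff_false, not_forall]
    obtain ⟨n, hn⟩ := exists_nat_gt (-x)
    exact ⟨n, by push_neg; linarith⟩
  have htd := tendsto_measure_iInter_atTop (μ := μ)
    (fun n => (measurableSet_Iic).nullMeasurableSet) hs ⟨0, measure_ne_top μ _⟩
  rw [hInter, measure_empty] at htd
  have htd2 : Tendsto (fun n : ℕ => (μ (Set.Iic (-(n:ℝ)))).toReal) atTop (𝓝 0) := by
    have := (ENNReal.tendsto_toReal (by simp)).comp htd
    simpa [Function.comp_def] using this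
  obtain ⟨n, hn⟩ := (htd2.eventually_lt_const hu).exists
  exact ⟨-(n:ℝ), hn⟩

lemma qset_bddAbove {u : ℝ} (hu : u < 1) :
    BddAbove {k : ℝ | (μ (Set.Iic k)).toReal < u} := by
  have htd : Tendsto (fun k : ℝ => (μ (Set.Iic k)).toReal) atTop (𝓝 1) := by
    have h1 := tendsto_measure_Iic_atTop (μ := μ)
    have := (ENNReal.tendsto_toReal (by simp : μ Set.univ ≠ ⊤)).comp h1
    simpa [measure_univ, Function.comp_def] using this
  obtain ⟨K, hK⟩ := eventually_atTop.1 (htd.eventually_const_lt hu)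
  refine ⟨K, fun k hk => ?_⟩
  have hk' : (μ (Set.Iic k)).toReal < u := hk
  by_contra hkK
  exact absurd (hK k (not_le.1 hkK).le) (not_lt.2 hk'.le)

lemma lt_quantile_imp {u k : ℝ} (hu : 0 < u) (hu1 : u < 1) (hk : k < quantile μ u) :
    (μ (Set.Iic k)).toReal < u := by
  obtain ⟨k', hk'm, hkk'⟩ := exists_lt_of_lt_csSup (qset_nonempty hu) hk
  exact lt_of_le_of_lt (cdfR_mono (le_of_lt hkk')) hk'm

lemma quantile_lt_imp {u k : ℝ} (hu1 : u < 1) (hk : quantile μ u < k) :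
    u ≤ (μ (Set.Iic k)).toReal := by
  by_contra h
  exact absurd (le_csSup (qset_bddAbove hu1) (not_le.1 h)) (not_le.2 hk)

lemma le_cdf_quantile {u : ℝ} (hu : 0 < u) (hu1 : u < 1) :
    ENNReal.ofReal u ≤ μ (Set.Iic (quantile μ u)) := by
  set g := quantile μ u
  have hs : Antitone (fun n : ℕ => Set.Iic (g + ((n:ℝ)+1)⁻¹)) := by
    intro a b hab
    have hab' : (a:ℝ) ≤ b := by exact_mod_cast hab
    exact Set.Iic_subset_Iic.2 (by gcongr)
  have hInter : (⋂ n : ℕ, Set.Iic (g + ((n:ℝ)+1)⁻¹)) = Set.Iic g := by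
    ext x
    simp only [Set.mem_iInter, Set.mem_Iic]
    constructor
    · intro hx
      refine le_of_forall_pos_le_add fun ε hε => ?_
      obtain ⟨n, hn⟩ := exists_nat_one_div_lt hε
      rw [one_div] at hn
      calc x ≤ g + ((n:ℝ)+1)⁻¹ := hx n
      _ ≤ g + ε := by linarith
    · intro hx n
      have : (0:ℝ) < ((n:ℝ)+1)⁻¹ := by positivity
      linarith
  have htd := tendsto_measure_iInter_atTop (μ := μ)
    (fun n => (measurableSet_Iic).nullMeasurableSet) hs ⟨0, measure_ne_top μ _⟩
  rw [hInter] at htd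
  refine ge_of_tendsto htd (Eventually.of_forall fun n => ?_)
  have h1 : u ≤ (μ (Set.Iic (g + ((n:ℝ)+1)⁻¹))).toReal :=
    quantile_lt_imp hu1 (lt_add_of_pos_right g (by positivity))
  exact ENNReal.ofReal_le_of_le_toReal h1

lemma u_le_cdfR_quantile {u : ℝ} (hu : 0 < u) (hu1 : u < 1) :
    u ≤ (μ (Set.Iic (quantile μ u))).toReal := by
  have h := ENNReal.toReal_mono (measure_ne_top μ _) (le_cdf_quantile (μ := μ) hu hu1)
  rwa [ENNReal.toReal_ofReal hu.le] at h

lemma cdf_lt_quantile_le {u : ℝ} (hu : 0 < u) (hu1 : u < 1) :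
    μ (Set.Iio (quantile μ u)) ≤ ENNReal.ofReal u := by
  set g := quantile μ u
  have hs : Monotone (fun n : ℕ => Set.Iic (g - ((n:ℝ)+1)⁻¹)) := by
    intro a b hab
    have hab' : (a:ℝ) ≤ b := by exact_mod_cast hab
    exact Set.Iic_subset_Iic.2 (by gcongr)
  have hUnion : (⋃ n : ℕ, Set.Iic (g - ((n:ℝ)+1)⁻¹)) = Set.Iio g := by
    ext x
    simp only [Set.mem_iUnion, Set.mem_Iic, Set.mem_Iio]
    constructor
    · rintro ⟨n, hn⟩
      have : (0:ℝ) < ((n:ℝ)+1)⁻¹ := by positivity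
      linarith
    · intro hx
      obtain ⟨n, hn⟩ := exists_nat_one_div_lt (by linarith : (0:ℝ) < g - x)
      rw [one_div] at hn
      exact ⟨n, by linarith⟩
  have htd := tendsto_measure_iUnion_atTop (μ := μ) hs
  rw [hUnion] at htd
  refine le_of_tendsto htd (Eventually.of_forall fun n => ?_)
  have h1 : (μ (Set.Iic (g - ((n:ℝ)+1)⁻¹))).toReal < u := by
    exact lt_quantile_imp hu hu1 (sub_lt_self g (by positivity))
  calc μ (Set.Iic (g - ((n:ℝ)+1)⁻¹))
      = ENNReal.ofReal (μ (Set.Iic (g - ((n:ℝ)+1)⁻¹))).toReal :=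
        (ENNReal.ofReal_toReal (measure_ne_top μ _)).symm
  _ ≤ ENNReal.ofReal u := ENNReal.ofReal_le_ofReal (le_of_lt h1)

lemma cdfR_lt_quantile_le {u : ℝ} (hu : 0 < u) (hu1 : u < 1) :
    (μ (Set.Iio (quantile μ u))).toReal ≤ u := by
  have := ENNReal.toReal_mono ENNReal.ofReal_ne_top (cdf_lt_quantile_le (μ := μ) hu hu1)
  rwa [ENNReal.toReal_ofReal (le_of_lt hu)] at this

lemma quantile_mono {u v : ℝ} (hu : 0 < u) (hv1 : v < 1) (huv : u ≤ v) :
    quantile μ u ≤ quantile μ v :=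
  csSup_le_csSup (qset_bddAbove hv1) (qset_nonempty hu)
    (fun k hk => lt_of_lt_of_le hk huv)

end CSIhelp

namespace CSIhelp

variable {μ : Measure ℝ} [IsProbabilityMeasure μ]

lemma muU_eq {u : ℝ} (hu : 0 < u) (hu1 : u < 1) :
    muU μ u = μ.restrict (Set.Iio (quantile μ u)) +
      (ENNReal.ofReal (u - (μ (Set.Iio (quantile μ u))).toReal)) •
        Measure.dirac (quantile μ u) := by
  rw [muU, if_neg (not_le.2 hu), if_neg (not_le.2 hu1)]

lemma Iic_eq_Iio_union {g : ℝ} : Set.Iic g = Set.Iio g ∪ {g} := by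
  ext x; simp [le_iff_lt_or_eq]

lemma muU_le_self {u : ℝ} (hu : 0 < u) (hu1 : u < 1) : muU μ u ≤ μ := by
  rw [muU_eq hu hu1, Measure.le_iff]
  intro s hs
  set g := quantile μ u with hgdef
  have hatom : ENNReal.ofReal (u - (μ (Set.Iio g)).toReal) ≤ μ {g} := by
    have h1 : u ≤ (μ (Set.Iic g)).toReal := u_le_cdfR_quantile hu hu1
    have h2 : μ (Set.Iic g) = μ (Set.Iio g) + μ {g} := by
      rw [Iic_eq_Iio_union,
        measure_union (Set.disjoint_singleton_right.mpr (by simp))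
          (measurableSet_singleton g)]
    have h3 : (μ (Set.Iic g)).toReal = (μ (Set.Iio g)).toReal + (μ {g}).toReal := by
      rw [h2, ENNReal.toReal_add (measure_ne_top μ _) (measure_ne_top μ _)]
    have h4 : u - (μ (Set.Iio g)).toReal ≤ (μ {g}).toReal := by linarith
    calc ENNReal.ofReal (u - (μ (Set.Iio g)).toReal)
        ≤ ENNReal.ofReal (μ {g}).toReal := ENNReal.ofReal_le_ofReal h4
      _ = μ {g} := ENNReal.ofReal_toReal (measure_ne_top μ _)
  simp only [Measure.coe_add, Pi.add_apply, Measure.restrict_apply hs,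
    Measure.smul_apply, smul_eq_mul, Measure.dirac_apply' g hs]
  by_cases hg : g ∈ s
  · rw [Set.indicator_of_mem hg]
    simp only [Pi.one_apply, mul_one]
    calc μ (s ∩ Set.Iio g) + ENNReal.ofReal (u - (μ (Set.Iio g)).toReal)
        ≤ μ (s ∩ Set.Iio g) + μ {g} := add_le_add_right hatom _
      _ = μ ((s ∩ Set.Iio g) ∪ {g}) := (measure_union
          (Set.disjoint_singleton_right.mpr (fun h => lt_irrefl g h.2))
          (measurableSet_singleton g)).symm
      _ ≤ μ s := measure_mono (by
          rintro x (⟨hx1, _⟩ | hx2)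
          · exact hx1
          · rw [Set.mem_singleton_iff] at hx2; rw [hx2]; exact hg)
  · rw [Set.indicator_of_notMem hg]
    simpa using measure_mono (Set.inter_subset_left (t := Set.Iio g))

lemma muU_mass {u : ℝ} (hu : 0 < u) (hu1 : u < 1) :
    muU μ u Set.univ = ENNReal.ofReal u := by
  rw [muU_eq hu hu1]
  simp only [Measure.coe_add, Pi.add_apply, Measure.restrict_apply MeasurableSet.univ,
    Set.univ_inter, Measure.smul_apply, smul_eq_mul, measure_univ, mul_one]
  set a := (μ (Set.Iio (quantile μ u))).toReal with ha
  have hnn : 0 ≤ u - a := by linarith [cdfR_lt_quantile_le (μ := μ) hu hu1]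
  rw [show μ (Set.Iio (quantile μ u)) = ENNReal.ofReal a from
      (ENNReal.ofReal_toReal (measure_ne_top μ _)).symm,
    ← ENNReal.ofReal_add (ha ▸ ENNReal.toReal_nonneg) hnn]
  congr 1
  ring

lemma muU_finite {u : ℝ} (hu : 0 < u) (hu1 : u < 1) :
    IsFiniteMeasure (muU μ u) :=
  ⟨by rw [muU_mass hu hu1]; exact ENNReal.ofReal_lt_top⟩

lemma muU_ae_le {u : ℝ} (hu : 0 < u) (hu1 : u < 1) :
    ∀ᵐ x ∂(muU μ u), x ≤ quantile μ u := by
  set g := quantile μ u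
  rw [ae_iff]
  have hset : {x : ℝ | ¬ x ≤ g} = Set.Ioi g := by ext x; simp [not_le]
  rw [hset, muU_eq hu hu1]
  simp only [Measure.coe_add, Pi.add_apply, Measure.restrict_apply measurableSet_Ioi,
    Measure.smul_apply, smul_eq_mul, Measure.dirac_apply' g measurableSet_Ioi]
  have h1 : Set.Ioi g ∩ Set.Iio g = ∅ := by
    ext x; simp only [Set.mem_inter_iff, Set.mem_Ioi, Set.mem_Iio,
      Set.mem_empty_iff_false, iff_false, not_and]; intro h; linarith
  rw [h1, Measure.dirac_apply' _ measurableSet_Ioi, Set.indicator_of_notMem (by simp [g])]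
  simp

lemma cpot_muU_formula {u : ℝ} (hμi : Integrable (fun x : ℝ => x) μ)
    (hu : 0 < u) (hu1 : u < 1) (k : ℝ) :
    Cpot (muU μ u) k = (∫ x in Set.Iio (quantile μ u), max (x - k) 0 ∂μ)
      + (u - (μ (Set.Iio (quantile μ u))).toReal) * max (quantile μ u - k) 0 := by
  set g := quantile μ u
  have hf_meas : Measurable fun x : ℝ => max (x - k) 0 :=
    (measurable_id.sub measurable_const).max measurable_const
  have hdint : Integrable (fun x => max (x - k) 0) (Measure.dirac g) := by
    refine (integrable_const (max (g - k) 0)).congr ((ae_dirac_iff ?_).2 rfl)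
    have := hf_meas (measurableSet_singleton (max (g - k) 0))
    convert this using 1
    ext x; simp [eq_comm]
  have hnn : 0 ≤ u - (μ (Set.Iio g)).toReal := by
    linarith [cdfR_lt_quantile_le (μ := μ) hu hu1]
  rw [Cpot, muU_eq hu hu1,
    integral_add_measure ((integrable_posp μ hμi k).restrict)
      (hdint.smul_measure ENNReal.ofReal_ne_top),
    integral_smul_measure, integral_dirac, ENNReal.toReal_ofReal hnn, smul_eq_mul]

lemma cpot_muU_zero {u k : ℝ} (hu : 0 < u) (hu1 : u < 1)
    (hk : quantile μ u ≤ k) : Cpot (muU μ u) k = 0 := by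
  rw [Cpot]
  refine integral_eq_zero_of_ae ?_
  filter_upwards [muU_ae_le hu hu1] with x hx
  simp only [Pi.zero_apply]
  exact max_eq_right (by linarith)

lemma cpot_muU_le {u : ℝ} (hμi : Integrable (fun x : ℝ => x) μ)
    (hu : 0 < u) (hu1 : u < 1) (k : ℝ) :
    Cpot (muU μ u) k ≤ u * max (quantile μ u - k) 0 := by
  haveI := muU_finite (μ := μ) hu hu1
  have hi : Integrable (fun x => max (x - k) 0) (muU μ u) :=
    (integrable_posp μ hμi k).mono_measure (muU_le_self hu hu1)
  have hb := integral_mono_ae hi (integrable_const (max (quantile μ u - k) 0)) ?_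
  · rw [integral_const, Measure.real, muU_mass hu hu1, ENNReal.toReal_ofReal hu.le, smul_eq_mul] at hb
    exact hb
  · filter_upwards [muU_ae_le hu hu1] with x hx
    exact max_le_max (by linarith) le_rfl

lemma cpot_muU_incr (hμi : Integrable (fun x : ℝ => x) μ) {u v k : ℝ}
    (hu : 0 < u) (hv1 : v < 1) (huv : u ≤ v) (hk : k ≤ quantile μ u) :
    Cpot (muU μ u) k + (v - u) * (quantile μ u - k) ≤ Cpot (muU μ v) k := by
  have hu1 : u < 1 := lt_of_le_of_lt huv hv1
  have hv : 0 < v := lt_of_lt_of_le hu huv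
  set gu := quantile μ u with hgu
  set gv := quantile μ v with hgv
  have hg : gu ≤ gv := quantile_mono hu hv1 huv
  have hdisj : Disjoint (Set.Iio gu) (Set.Ico gu gv) :=
    Set.disjoint_left.mpr fun x hx hx2 => absurd hx2.1 (not_le.2 hx)
  rw [cpot_muU_formula hμi hu hu1 k, cpot_muU_formula hμi hv hv1 k]
  have hsplit : ∫ x in Set.Iio gv, max (x - k) 0 ∂μ
      = (∫ x in Set.Iio gu, max (x - k) 0 ∂μ)
        + ∫ x in Set.Ico gu gv, max (x - k) 0 ∂μ := by
    rw [← Set.Iio_union_Ico_eq_Iio hg]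
    exact setIntegral_union hdisj measurableSet_Ico
      ((integrable_posp μ hμi k).integrableOn)
      ((integrable_posp μ hμi k).integrableOn)
  have hIco : (μ (Set.Ico gu gv)).toReal
      = (μ (Set.Iio gv)).toReal - (μ (Set.Iio gu)).toReal := by
    have hmu : μ (Set.Iio gu) + μ (Set.Ico gu gv) = μ (Set.Iio gv) := by
      rw [← Set.Iio_union_Ico_eq_Iio hg, measure_union hdisj measurableSet_Ico]
    have h2 := congrArg ENNReal.toReal hmu
    rw [ENNReal.toReal_add (measure_ne_top μ _) (measure_ne_top μ _)] at h2
    linarith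
  have hIcoLB : (gu - k) * (μ (Set.Ico gu gv)).toReal
      ≤ ∫ x in Set.Ico gu gv, max (x - k) 0 ∂μ := by
    have hmono := setIntegral_mono_on
      (f := fun _ => gu - k) (s := Set.Ico gu gv)
      (integrableOn_const (measure_ne_top μ _))
      ((integrable_posp μ hμi k).integrableOn) measurableSet_Ico
      (fun x hx => by
        calc gu - k ≤ x - k := by linarith [hx.1]
        _ ≤ max (x - k) 0 := le_max_left _ _)
    rw [setIntegral_const, smul_eq_mul, Measure.real] at hmono
    linarith [hmono]
  have hmaxu : max (gu - k) 0 = gu - k := max_eq_left (by linarith)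
  have hmaxv : max (gv - k) 0 = gv - k := max_eq_left (by linarith)
  have h1 : (μ (Set.Iio gu)).toReal ≤ u := cdfR_lt_quantile_le hu hu1
  have h2 : (μ (Set.Iio gv)).toReal ≤ v := cdfR_lt_quantile_le hv hv1
  rw [hsplit, hmaxu, hmaxv]
  nlinarith [hIcoLB, hIco, mul_nonneg (sub_nonneg.2 h2) (sub_nonneg.2 hg),
    sub_nonneg.2 hk, sub_nonneg.2 hg]

end CSIhelp


/-- Corollary 4.5: `c` is strictly increasing on `(u*, 1)`. -/
theorem c_strictly_increasing_after_uStar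
    (μ ν : MeasureTheory.Measure ℝ)
    [MeasureTheory.IsProbabilityMeasure μ] [MeasureTheory.IsProbabilityMeasure ν]
    (hμ : MeasureTheory.Integrable (fun x : ℝ => x) μ)
    (hν : MeasureTheory.Integrable (fun x : ℝ => x) ν)
    (hcd : LeCD μ ν)
    (c : ℝ → ℝ)
    (hc0 : c 0 = 0)
    (hcu : ∀ u ∈ Set.Ioo (0:ℝ) 1, c u = ⨆ k : ℝ, (Cpot (muU μ u) k - Cpot ν k))
    (uStar : ℝ) (huStar : uStar = sSup {u : ℝ | u ∈ Set.Ioo (0:ℝ) 1 ∧ c u = 0}) :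
    ∀ u v : ℝ, uStar < u → u < v → v < 1 → c u < c v := by
  intro u v huS huv hv1
  have hustar0 : 0 ≤ uStar := by
    rw [huStar]; exact Real.sSup_nonneg (fun x hx => le_of_lt hx.1.1)
  have hu0 : 0 < u := lt_of_le_of_lt hustar0 huS
  have hu1 : u < 1 := lt_trans huv hv1
  have hv0 : 0 < v := lt_trans hu0 huv
  have humem : u ∈ Set.Ioo (0:ℝ) 1 := ⟨hu0, hu1⟩
  have hvmem : v ∈ Set.Ioo (0:ℝ) 1 := ⟨hv0, hv1⟩
  have hub : ∀ w ∈ Set.Ioo (0:ℝ) 1, ∀ k : ℝ,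
      Cpot (muU μ w) k - Cpot ν k ≤ (∫ x, x ∂μ) - ∫ x, x ∂ν := by
    intro w hw k
    have h1 : Cpot (muU μ w) k ≤ Cpot μ k :=
      CSIhelp.cpot_mono_measure (CSIhelp.muU_le_self hw.1 hw.2) hμ k
    have h2 : Cpot μ k = (∫ x, x ∂μ) - k + Ppot μ k := CSIhelp.cpot_eq μ hμ k
    have h3 : Cpot ν k = (∫ x, x ∂ν) - k + Ppot ν k := CSIhelp.cpot_eq ν hν k
    have h4 : Ppot μ k ≤ Ppot ν k := CSIhelp.ppot_le hμ hν hcd k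
    linarith
  have hbddu : BddAbove (Set.range fun k => Cpot (muU μ u) k - Cpot ν k) :=
    ⟨_, fun y hy => by obtain ⟨k, rfl⟩ := hy; exact hub u humem k⟩
  have hbddv : BddAbove (Set.range fun k => Cpot (muU μ v) k - Cpot ν k) :=
    ⟨_, fun y hy => by obtain ⟨k, rfl⟩ := hy; exact hub v hvmem k⟩
  haveI hfinu : MeasureTheory.IsFiniteMeasure (muU μ u) := CSIhelp.muU_finite hu0 hu1
  have hμui : MeasureTheory.Integrable (fun x : ℝ => x) (muU μ u) :=
    hμ.mono_measure (CSIhelp.muU_le_self hu0 hu1)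
  have hFtend : Filter.Tendsto (fun k => Cpot (muU μ u) k - Cpot ν k)
      Filter.atTop (nhds 0) := by
    have := (CSIhelp.cpot_tendsto (muU μ u) hμui).sub (CSIhelp.cpot_tendsto ν hν)
    simpa using this
  have hcu_eq := hcu u humem
  have hcv_eq := hcu v hvmem
  have hcu_nonneg : 0 ≤ c u := by
    rw [hcu_eq]
    exact le_of_tendsto' hFtend (fun k => le_ciSup hbddu k)
  have hcu_pos : 0 < c u := by
    rcases eq_or_lt_of_le hcu_nonneg with heq | h
    · exfalso
      have hmem : u ∈ {w : ℝ | w ∈ Set.Ioo (0:ℝ) 1 ∧ c w = 0} := ⟨humem, heq.symm⟩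
      have hbdd : BddAbove {w : ℝ | w ∈ Set.Ioo (0:ℝ) 1 ∧ c w = 0} :=
        ⟨1, fun x hx => hx.1.2.le⟩
      have := le_csSup hbdd hmem
      rw [← huStar] at this
      linarith
    · exact h
  set M := c u with hM
  set gu := quantile μ u with hgu
  obtain ⟨a0, ha0⟩ := Filter.eventually_atTop.1
    (hFtend.eventually_lt_const (half_pos hcu_pos))
  set mν := ∫ x, x ∂ν with hmν
  set C0 := u * gu - mν with hC0
  set b := min gu ((M/2 - C0)/(1-u)) with hb
  have hbleft : ∀ k ≤ b, Cpot (muU μ u) k - Cpot ν k ≤ M/2 := by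
    intro k hk
    have hk_gu : k ≤ gu := le_trans hk (min_le_left _ _)
    have h1 : Cpot (muU μ u) k ≤ u * (gu - k) := by
      have := CSIhelp.cpot_muU_le hμ hu0 hu1 k
      rwa [max_eq_left (by linarith)] at this
    have h2 : mν - k ≤ Cpot ν k := CSIhelp.cpot_ge ν hν k
    have h3 : (1-u) * k ≤ (1-u) * ((M/2 - C0)/(1-u)) :=
      mul_le_mul_of_nonneg_left (le_trans hk (min_le_right _ _)) (by linarith)
    rw [mul_div_cancel₀ _ (by linarith : (1:ℝ)-u ≠ 0)] at h3
    nlinarith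
  set a := max a0 b with ha
  have hcont : ContinuousOn (fun k => Cpot (muU μ u) k - Cpot ν k) (Set.Icc b a) :=
    ((CSIhelp.cpot_continuous _ hμui).sub (CSIhelp.cpot_continuous ν hν)).continuousOn
  obtain ⟨kstar, hkmem, hkmax⟩ := isCompact_Icc.exists_isMaxOn
    (Set.nonempty_Icc.2 (le_max_right a0 b)) hcont
  have hFk : Cpot (muU μ u) kstar - Cpot ν kstar = M := by
    have hle : Cpot (muU μ u) kstar - Cpot ν kstar ≤ M :=
      le_of_le_of_eq (le_ciSup hbddu kstar) hcu_eq.symm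
    have hge : M ≤ Cpot (muU μ u) kstar - Cpot ν kstar := by
      have hsup : (⨆ k : ℝ, (Cpot (muU μ u) k - Cpot ν k))
          ≤ max (Cpot (muU μ u) kstar - Cpot ν kstar) (M/2) := by
        refine ciSup_le fun k => ?_
        by_cases hk1 : k ∈ Set.Icc b a
        · exact le_max_of_le_left (hkmax hk1)
        · simp only [Set.mem_Icc, not_and_or, not_le] at hk1
          rcases hk1 with hk1 | hk1
          · exact le_max_of_le_right (hbleft k hk1.le)
          · exact le_max_of_le_right (ha0 k (le_trans (le_max_left a0 b) hk1.le)).le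
      have hsup2 : M ≤ max (Cpot (muU μ u) kstar - Cpot ν kstar) (M/2) :=
        hcu_eq.trans_le hsup
      rcases le_max_iff.1 hsup2 with h | h
      · exact h
      · linarith
    linarith
  have hkgu : kstar < gu := by
    by_contra hge2
    push_neg at hge2
    have h0 : Cpot (muU μ u) kstar = 0 := CSIhelp.cpot_muU_zero hu0 hu1 hge2
    have h5 := CSIhelp.cpot_nonneg ν kstar
    rw [h0] at hFk
    linarith
  have hincr := CSIhelp.cpot_muU_incr hμ (k := kstar) hu0 hv1 huv.le hkgu.le
  have hvk : Cpot (muU μ v) kstar - Cpot ν kstar ≤ c v := by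
    rw [hcv_eq]; exact le_ciSup hbddv kstar
  have hpos : 0 < (v - u) * (gu - kstar) := mul_pos (by linarith) (by linarith)
  linarith
end
end
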